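/- arXiv:1412.8628 — 3 statements merged into one kernel-verified Lean document; each statement's English description precedes it below -/
import Mathlib

section
/- Under Assumptions 1–3, let α* ∈ I and T > 0. Let, for some s ≥ 0 and τ ∈ [s, s+T), continuous functions u_i : [τ, s+T) → B_{α*}, i = 1, 2, both satisfy the differential equation d/dt u(t) = Au(t) + Zu(t) on (τ, s+T) in B_{α*}. Suppose there exists α_τ ∈ (α̲, α*) such that τ + T(α_τ, α*) ≥ s + T and u_1(τ) = u_2(τ) =: u_τ ∈ B_{α_τ}. Then u_1(t) = u_2(t) in B_{α*} for all t ∈ (τ, s+T). In particular, the solution constructed in the existence theorem is unique. -/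
noncomputable section

open Set

/-- Convergence `f t → L` as `t → t₀` within the set `s`, with respect to the
norm-like functional `nrm`. -/
def STendsTo {V : Type} [AddCommGroup V] (nrm : V → ℝ) (f : ℝ → V) (s : Set ℝ)
    (t₀ : ℝ) (L : V) : Prop :=
  ∀ ε > 0, ∃ δ > 0, ∀ t ∈ s, t ≠ t₀ → |t - t₀| < δ → nrm (f t - L) < ε

/-- Continuity of `f` on the set `s`, with respect to the norm-like functional `nrm`. -/
def SContinuousOn {V : Type} [AddCommGroup V] (nrm : V → ℝ) (f : ℝ → V) (s : Set ℝ) : Prop :=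
  ∀ t₀ ∈ s, STendsTo nrm f s t₀ (f t₀)

/-- `f` has the derivative `L` at `t₀` within the set `s`, w.r.t. the norm-like
functional `nrm`. -/
def SHasDerivWithin {V : Type} [AddCommGroup V] [Module ℝ V] (nrm : V → ℝ)
    (f : ℝ → V) (s : Set ℝ) (t₀ : ℝ) (L : V) : Prop :=
  STendsTo nrm (fun t => (t - t₀)⁻¹ • (f t - f t₀)) s t₀ L

/-- The setting of Assumptions 1–3 of the paper: an increasing scale of Banach
spaces `B α`, `α ∈ I = (α̲, ᾱ)`, realized as submodules of an ambient vector space `V`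
with norms `nrm α`; an operator `A` generating `C₀`-semigroups `S α` on closed subspaces
`C α ⊆ B α` with domains `D α`; and an Ovsyannikov-type operator `Z` acting in the scale. -/
structure OvsSystem where
  /-- the ambient vector space containing all spaces of the scale -/
  V : Type
  [grp : AddCommGroup V]
  [mod : Module ℝ V]
  /-- the lower bound `α̲ > 0` of the index interval -/
  aLow : ℝ
  /-- the upper bound `ᾱ ∈ (α̲, ∞]` of the index interval -/
  aHigh : EReal
  aLow_pos : 0 < aLow
  aLow_lt_aHigh : (aLow : EReal) < aHigh
  /-- the index interval `I = (α̲, ᾱ)` -/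
  idx : Set ℝ
  idx_def : idx = {α : ℝ | aLow < α ∧ (α : EReal) < aHigh}
  -- Assumption 1: an increasing scale of Banach spaces
  /-- the spaces of the scale -/
  B : ℝ → Submodule ℝ V
  /-- the norms of the spaces of the scale -/
  nrm : ℝ → V → ℝ
  nrm_nonneg : ∀ α ∈ idx, ∀ u ∈ B α, 0 ≤ nrm α u
  nrm_eq_zero : ∀ α ∈ idx, ∀ u ∈ B α, nrm α u = 0 → u = 0
  nrm_zero : ∀ α ∈ idx, nrm α 0 = 0
  nrm_add : ∀ α ∈ idx, ∀ u ∈ B α, ∀ v ∈ B α, nrm α (u + v) ≤ nrm α u + nrm α v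
  nrm_smul : ∀ α ∈ idx, ∀ c : ℝ, ∀ u ∈ B α, nrm α (c • u) = |c| * nrm α u
  /-- each `(B α, nrm α)` is complete -/
  complete : ∀ α ∈ idx, ∀ u : ℕ → V, (∀ n, u n ∈ B α) →
    (∀ ε > 0, ∃ K : ℕ, ∀ m ≥ K, ∀ n ≥ K, nrm α (u m - u n) < ε) →
    ∃ v ∈ B α, ∀ ε > 0, ∃ K : ℕ, ∀ n ≥ K, nrm α (u n - v) < ε
  /-- the scale is increasing: `B α' ⊆ B α''` for `α' ≤ α''` -/
  B_mono : ∀ α' ∈ idx, ∀ α'' ∈ idx, α' ≤ α'' → B α' ≤ B α''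
  /-- the norms decrease along the scale: `‖u‖_{α''} ≤ ‖u‖_{α'}` for `α' ≤ α''` -/
  nrm_mono : ∀ α' ∈ idx, ∀ α'' ∈ idx, α' ≤ α'' → ∀ u ∈ B α', nrm α'' u ≤ nrm α' u
  -- Assumption 2: the operator `A` and the semigroups `S α`
  /-- the closed subspaces `C α ⊆ B α` -/
  C : ℝ → Submodule ℝ V
  /-- the domains `D α ⊆ C α` -/
  D : ℝ → Submodule ℝ V
  D_le_C : ∀ α ∈ idx, D α ≤ C α
  C_le_B : ∀ α ∈ idx, C α ≤ B α
  /-- `C α` is closed in `(B α, nrm α)` -/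
  C_closed : ∀ α ∈ idx, ∀ u : ℕ → V, (∀ n, u n ∈ C α) → ∀ v ∈ B α,
    (∀ ε > 0, ∃ K : ℕ, ∀ n ≥ K, nrm α (u n - v) < ε) → v ∈ C α
  /-- `D α` is dense in `(C α, nrm α)` -/
  D_dense : ∀ α ∈ idx, ∀ v ∈ C α, ∀ ε > 0, ∃ u ∈ D α, nrm α (v - u) < ε
  /-- the operator `A` (defined on the whole of `V`; the paper requires it on `B_I`) -/
  A : V →ₗ[ℝ] V
  /-- `A` maps `B_I = ⋃_{α ∈ I} B_α` into itself -/
  A_maps : ∀ α ∈ idx, ∀ u ∈ B α, ∃ β ∈ idx, A u ∈ B β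
  /-- the constant `ν ≥ 1` in the uniform exponential bound -/
  nu : ℝ
  /-- the constant `ω ∈ ℝ` in the uniform exponential bound -/
  om : ℝ
  one_le_nu : 1 ≤ nu
  /-- the semigroups: `S α t` is the semigroup on `C α` at time `t` -/
  S : ℝ → ℝ → V → V
  S_mem : ∀ α ∈ idx, ∀ t ≥ 0, ∀ u ∈ C α, S α t u ∈ C α
  S_id : ∀ α ∈ idx, ∀ u ∈ C α, S α 0 u = u
  S_semigroup : ∀ α ∈ idx, ∀ t ≥ 0, ∀ t' ≥ 0, ∀ u ∈ C α,
    S α t (S α t' u) = S α (t + t') u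
  S_add : ∀ α ∈ idx, ∀ t ≥ 0, ∀ u ∈ C α, ∀ v ∈ C α, S α t (u + v) = S α t u + S α t v
  S_smul : ∀ α ∈ idx, ∀ t ≥ 0, ∀ c : ℝ, ∀ u ∈ C α, S α t (c • u) = c • S α t u
  /-- the uniform exponential bound `‖S_α(t)‖ ≤ ν e^{ωt}` -/
  S_bound : ∀ α ∈ idx, ∀ t ≥ 0, ∀ u ∈ C α, nrm α (S α t u) ≤ nu * Real.exp (om * t) * nrm α u
  /-- strong continuity of `S α` on `C α` -/
  S_cont : ∀ α ∈ idx, ∀ u ∈ C α, ∀ t₀ ≥ 0, ∀ ε > 0, ∃ δ > 0, ∀ t ≥ 0,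
    |t - t₀| < δ → nrm α (S α t u - S α t₀ u) < ε
  /-- `(A, D α)` is the generator of `S α`: on `D α` the semigroup is differentiable
  at `t = 0` with derivative `A u` -/
  S_gen : ∀ α ∈ idx, ∀ u ∈ D α, ∀ ε > 0, ∃ δ > 0, ∀ t : ℝ, 0 < t → t < δ →
    nrm α (t⁻¹ • (S α t u - u) - A u) < ε
  /-- `D α` is the full generator domain -/
  S_gen_max : ∀ α ∈ idx, ∀ u ∈ C α, ∀ v ∈ C α,
    (∀ ε > 0, ∃ δ > 0, ∀ t : ℝ, 0 < t → t < δ → nrm α (t⁻¹ • (S α t u - u) - v) < ε) →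
    u ∈ D α
  /-- `B α' ⊆ D α` for `α' < α` -/
  B_le_D : ∀ α' ∈ idx, ∀ α ∈ idx, α' < α → B α' ≤ D α
  /-- `B α'` is `S α`-invariant for `α' < α` -/
  B_invariant : ∀ α' ∈ idx, ∀ α ∈ idx, α' < α → ∀ t ≥ 0, ∀ u ∈ B α', S α t u ∈ B α'
  /-- `S α` restricted to `B α'` coincides with `S α'`, for `α' < α` -/
  S_restrict : ∀ α' ∈ idx, ∀ α ∈ idx, α' < α → ∀ t ≥ 0, ∀ u ∈ B α', S α t u = S α' t u
  -- Assumption 3: the Ovsyannikov operator `Z`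
  /-- the increasing continuous function `M : I → (0, ∞)` -/
  M : ℝ → ℝ
  /-- the increasing continuous function `N : I → (0, ∞)` -/
  Nf : ℝ → ℝ
  M_pos : ∀ α ∈ idx, 0 < M α
  N_pos : ∀ α ∈ idx, 0 < Nf α
  M_mono : ∀ α' ∈ idx, ∀ α'' ∈ idx, α' ≤ α'' → M α' ≤ M α''
  N_mono : ∀ α' ∈ idx, ∀ α'' ∈ idx, α' ≤ α'' → Nf α' ≤ Nf α''
  M_cont : ContinuousOn M idx
  N_cont : ContinuousOn Nf idx
  /-- the operator `Z` (defined on the whole of `V`; the paper requires it on `B_I`) -/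
  Z : V →ₗ[ℝ] V
  /-- `Z` maps `B α'` into `B α''` for `α̲ < α' < α'' ≤ α*`, `α* ∈ I` -/
  Z_mem : ∀ αst ∈ idx, ∀ α' α'' : ℝ, aLow < α' → α' < α'' → α'' ≤ αst →
    ∀ u ∈ B α', Z u ∈ B α''
  /-- the Ovsyannikov bound `‖Zu‖_{α''} ≤ (M(α*)/(α''-α') + N(α*)) ‖u‖_{α'}` -/
  Z_bound : ∀ αst ∈ idx, ∀ α' α'' : ℝ, aLow < α' → α' < α'' → α'' ≤ αst →
    ∀ u ∈ B α', nrm α'' (Z u) ≤ (M αst / (α'' - α') + Nf αst) * nrm α' u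

attribute [instance] OvsSystem.grp OvsSystem.mod

namespace OvsSystem

/-- The time horizon `T(α, β) = (β − α)/(e ν M(β))`. -/
def Tt (P : OvsSystem) (α β : ℝ) : ℝ := (β - α) / (Real.exp 1 * P.nu * P.M β)

/-- `u` is a solution on `[s, s+T)` in `B α*` of `d/dt u = Au + Zu`, `u(s) = u_s`:
it takes values in `B α*`, is continuous on `[s, s+T)`, satisfies
`Au(t), Zu(t) ∈ B α*` and the differential equation on `(s, s+T)`, and `u(s) = u_s`. -/
def IsSol (P : OvsSystem) (αst s T : ℝ) (us : P.V) (u : ℝ → P.V) : Prop :=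
  (∀ t ∈ Set.Ico s (s + T), u t ∈ P.B αst) ∧
  SContinuousOn (P.nrm αst) u (Set.Ico s (s + T)) ∧
  (∀ t ∈ Set.Ioo s (s + T), P.A (u t) ∈ P.B αst ∧ P.Z (u t) ∈ P.B αst) ∧
  (∀ t ∈ Set.Ioo s (s + T),
    SHasDerivWithin (P.nrm αst) u (Set.Ico s (s + T)) t (P.A (u t) + P.Z (u t))) ∧
  u s = us

end OvsSystem

namespace OvsSystem

variable (P : OvsSystem)

lemma idx_low {α : ℝ} (h : α ∈ P.idx) : P.aLow < α := by
  rw [P.idx_def] at h; exact h.1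

lemma idx_high {α : ℝ} (h : α ∈ P.idx) : (α : EReal) < P.aHigh := by
  rw [P.idx_def] at h; exact h.2

lemma mem_idx {α : ℝ} (h1 : P.aLow < α) (h2 : (α : EReal) < P.aHigh) : α ∈ P.idx := by
  rw [P.idx_def]; exact ⟨h1, h2⟩

lemma mem_idx_between {α β : ℝ} (hβ : β ∈ P.idx) (h1 : P.aLow < α) (h2 : α ≤ β) : α ∈ P.idx :=
  P.mem_idx h1 (lt_of_le_of_lt (EReal.coe_le_coe_iff.mpr h2) (P.idx_high hβ))

lemma nrm_neg' {α : ℝ} (hα : α ∈ P.idx) {u : P.V} (hu : u ∈ P.B α) :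
    P.nrm α (-u) = P.nrm α u := by
  have h := P.nrm_smul α hα (-1) u hu
  simpa using h

lemma nrm_sub_le' {α : ℝ} (hα : α ∈ P.idx) {u v : P.V} (hu : u ∈ P.B α) (hv : v ∈ P.B α) :
    P.nrm α (u - v) ≤ P.nrm α u + P.nrm α v := by
  have h := P.nrm_add α hα u hu (-v) (Submodule.neg_mem _ hv)
  rw [P.nrm_neg' hα hv] at h
  simpa [sub_eq_add_neg] using h

lemma abs_nrm_sub_nrm_le {α : ℝ} (hα : α ∈ P.idx) {u v : P.V} (hu : u ∈ P.B α)
    (hv : v ∈ P.B α) : |P.nrm α u - P.nrm α v| ≤ P.nrm α (u - v) := by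
  have h1 : P.nrm α u ≤ P.nrm α (u - v) + P.nrm α v := by
    have h := P.nrm_add α hα (u - v) (Submodule.sub_mem _ hu hv) v hv
    simpa using h
  have h2 : P.nrm α v ≤ P.nrm α (u - v) + P.nrm α u := by
    have h := P.nrm_add α hα (v - u) (Submodule.sub_mem _ hv hu) u hu
    have hne : P.nrm α (v - u) = P.nrm α (u - v) := by
      have := P.nrm_neg' hα (Submodule.sub_mem _ hu hv)
      simpa [neg_sub] using this
    rw [hne] at h
    simpa using h
  rw [abs_le]; constructor <;> linarith

lemma S_zero' {α : ℝ} (hα : α ∈ P.idx) {t : ℝ} (ht : 0 ≤ t) : P.S α t 0 = 0 := by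
  have h := P.S_smul α hα t ht (0 : ℝ) 0 (Submodule.zero_mem _)
  simpa using h

lemma S_sub' {α : ℝ} (hα : α ∈ P.idx) {t : ℝ} (ht : 0 ≤ t) {u v : P.V}
    (hu : u ∈ P.C α) (hv : v ∈ P.C α) :
    P.S α t (u - v) = P.S α t u - P.S α t v := by
  have h1 := P.S_add α hα t ht u hu (-v) (Submodule.neg_mem _ hv)
  have h2 := P.S_smul α hα t ht (-1) v hv
  have h3 : P.S α t (-v) = -P.S α t v := by simpa using h2
  rw [sub_eq_add_neg, h1, h3, ← sub_eq_add_neg]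

lemma nu_pos : 0 < P.nu := lt_of_lt_of_le one_pos P.one_le_nu

lemma S_boundU {α : ℝ} (hα : α ∈ P.idx) {t R : ℝ} (ht : 0 ≤ t) (htR : t ≤ R) {u : P.V}
    (hu : u ∈ P.C α) :
    P.nrm α (P.S α t u) ≤ P.nu * Real.exp (|P.om| * R) * P.nrm α u := by
  have h1 := P.S_bound α hα t ht u hu
  have h2 : Real.exp (P.om * t) ≤ Real.exp (|P.om| * R) := by
    apply Real.exp_le_exp.mpr
    calc P.om * t ≤ |P.om| * t := mul_le_mul_of_nonneg_right (le_abs_self _) ht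
    _ ≤ |P.om| * R := mul_le_mul_of_nonneg_left htR (abs_nonneg _)
  have h3 : 0 ≤ P.nrm α u := P.nrm_nonneg α hα u (P.C_le_B α hα hu)
  calc P.nrm α (P.S α t u) ≤ P.nu * Real.exp (P.om * t) * P.nrm α u := h1
  _ ≤ P.nu * Real.exp (|P.om| * R) * P.nrm α u := by
      apply mul_le_mul_of_nonneg_right _ h3
      exact mul_le_mul_of_nonneg_left h2 (P.nu_pos).le

lemma one_le_CE {R : ℝ} (hR : 0 ≤ R) : 1 ≤ P.nu * Real.exp (|P.om| * R) := by
  have h1 : (1:ℝ) ≤ Real.exp (|P.om| * R) := Real.one_le_exp (by positivity)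
  nlinarith [P.one_le_nu]

lemma pow_self_le (n : ℕ) : (n : ℝ) ^ n ≤ Real.exp 1 ^ n * n.factorial := by
  induction n with
  | zero => simp
  | succ n ih =>
    rcases Nat.eq_zero_or_pos n with h | h
    · subst h
      simpa using Real.one_le_exp (le_of_lt one_pos)
    · have hn : (0:ℝ) < n := by exact_mod_cast h
      have key : ((n:ℝ) + 1) ^ n ≤ Real.exp 1 * (n:ℝ) ^ n := by
        have h1 : (n:ℝ) + 1 ≤ n * Real.exp (1/n) := by
          have h2 := Real.add_one_le_exp (1/(n:ℝ))
          have h3 : (n:ℝ) * (1/n + 1) = n + 1 := by field_simp; ring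
          nlinarith
        calc ((n:ℝ) + 1) ^ n ≤ ((n:ℝ) * Real.exp (1/n)) ^ n :=
              pow_le_pow_left₀ (by positivity) h1 n
        _ = (n:ℝ) ^ n * Real.exp (1/n) ^ n := mul_pow _ _ _
        _ = (n:ℝ) ^ n * Real.exp 1 := by
            rw [← Real.exp_nat_mul]
            congr 1
            field_simp
        _ = Real.exp 1 * (n:ℝ) ^ n := mul_comm _ _
      have hfact : ((n+1).factorial : ℝ) = ((n:ℝ) + 1) * n.factorial := by
        rw [Nat.factorial_succ]; push_cast; ring
      have hcast : ((n+1 : ℕ) : ℝ) = (n:ℝ) + 1 := by push_cast; ring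
      rw [hcast, hfact]
      calc ((n:ℝ) + 1) ^ (n+1) = ((n:ℝ) + 1) * ((n:ℝ) + 1) ^ n := by ring
      _ ≤ ((n:ℝ) + 1) * (Real.exp 1 * (n:ℝ) ^ n) :=
          mul_le_mul_of_nonneg_left key (by positivity)
      _ ≤ ((n:ℝ) + 1) * (Real.exp 1 * (Real.exp 1 ^ n * n.factorial)) := by
          apply mul_le_mul_of_nonneg_left _ (by positivity)
          exact mul_le_mul_of_nonneg_left ih (Real.exp_pos 1).le
      _ = Real.exp 1 ^ (n+1) * (((n:ℝ) + 1) * n.factorial) := by ring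

lemma mvt (lam : ℝ) (hl : lam ∈ P.idx) (g : ℝ → P.V) (H : ℝ → ℝ) (a b : ℝ) (hab : a < b)
    (hg : ∀ r ∈ Set.Icc a b, g r ∈ P.B lam)
    (hphi : ContinuousOn (fun r => P.nrm lam (g r - g a)) (Set.Icc a b))
    (hH : ContinuousOn H (Set.Icc a b))
    (key : ∀ c ∈ Set.Ioo a b, ∀ ε > 0, ∃ δ > 0, ∀ r ∈ Set.Ico a c, c - r < δ →
      P.nrm lam (g c - g r) ≤ H c - H r + ε * (c - r)) :
    P.nrm lam (g b - g a) ≤ H b - H a := by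
  set φ : ℝ → ℝ := fun r => P.nrm lam (g r - g a) with hφdef
  have hφ0 : φ a = 0 := by
    simp only [hφdef, sub_self]
    exact P.nrm_zero lam hl
  have step1 : ∀ ε > 0, ∀ b' ∈ Set.Ioo a b, φ b' ≤ H b' - H a + ε * (b' - a) + ε := by
    intro ε hε b' hb'
    by_contra hcon
    push_neg at hcon
    set ψ : ℝ → ℝ := fun r => φ r - (H r - H a) - ε * (r - a) - ε with hψdef
    have hIccsub : Set.Icc a b' ⊆ Set.Icc a b := Set.Icc_subset_Icc le_rfl hb'.2.le
    have hψcont : ContinuousOn ψ (Set.Icc a b') := by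
      apply ContinuousOn.sub
      apply ContinuousOn.sub
      · exact ContinuousOn.sub (hphi.mono hIccsub) ((hH.mono hIccsub).sub continuousOn_const)
      · exact (continuous_const.mul (continuous_id.sub continuous_const)).continuousOn
      · exact continuousOn_const
    set F := Set.Icc a b' ∩ ψ ⁻¹' (Set.Ici 0) with hFdef
    have hFc : IsClosed F := hψcont.preimage_isClosed_of_isClosed isClosed_Icc isClosed_Ici
    have hne : F.Nonempty := ⟨b', ⟨hb'.1.le, le_rfl⟩, by
      simp only [Set.mem_preimage, Set.mem_Ici, hψdef]; linarith⟩
    have hbdd : BddBelow F := ⟨a, fun x hx => hx.1.1⟩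
    set c := sInf F with hcdef
    have hcF : c ∈ F := hFc.csInf_mem hne hbdd
    have hψc : 0 ≤ ψ c := hcF.2
    have hψa : ψ a = -ε := by simp [hψdef, hφ0]
    have hca : a < c := by
      rcases eq_or_lt_of_le hcF.1.1 with h | h
      · exfalso; rw [← h] at hψc; rw [hψa] at hψc; linarith
      · exact h
    have hcIoo : c ∈ Set.Ioo a b := ⟨hca, lt_of_le_of_lt hcF.1.2 hb'.2⟩
    obtain ⟨δ, hδ, hkey⟩ := key c hcIoo (ε/2) (by linarith)
    set r := max a (c - δ/2) with hrdef
    have hra : a ≤ r := le_max_left _ _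
    have hrc : r < c := max_lt hca (by linarith)
    have hcr : c - r < δ := by
      have h1 : c - δ/2 ≤ r := le_max_right _ _
      linarith
    have hrIcc : r ∈ Set.Icc a b' := ⟨hra, le_trans hrc.le hcF.1.2⟩
    have hψr : ψ r < 0 := by
      by_contra h
      push_neg at h
      have hrF : r ∈ F := ⟨hrIcc, h⟩
      exact absurd (csInf_le hbdd hrF) (not_le.mpr hrc)
    have hkr := hkey r ⟨hra, hrc⟩ hcr
    have hcb : c ∈ Set.Icc a b := ⟨hca.le, hcIoo.2.le⟩
    have hrb : r ∈ Set.Icc a b := ⟨hra, le_trans hrIcc.2 hb'.2.le⟩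
    have htri : φ c ≤ P.nrm lam (g c - g r) + φ r := by
      have hm1 : g c - g r ∈ P.B lam := Submodule.sub_mem _ (hg c hcb) (hg r hrb)
      have hm2 : g r - g a ∈ P.B lam :=
        Submodule.sub_mem _ (hg r hrb) (hg a ⟨le_rfl, hab.le⟩)
      have h := P.nrm_add lam hl (g c - g r) hm1 (g r - g a) hm2
      rw [sub_add_sub_cancel] at h
      exact h
    have hcc : ψ c < 0 := by
      simp only [hψdef] at hψr ⊢
      have h2 : φ c ≤ H c - H r + ε/2 * (c - r) + φ r := by linarith
      nlinarith
    linarith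
  have hbIcc : b ∈ Set.Icc a b := Set.right_mem_Icc.mpr hab.le
  have step2 : ∀ ε > 0, φ b ≤ H b - H a + ε * (b - a) + 4 * ε := by
    intro ε hε
    obtain ⟨δ1, hδ1, hc1⟩ := Metric.continuousWithinAt_iff.mp (hphi b hbIcc) ε hε
    obtain ⟨δ2, hδ2, hc2⟩ := Metric.continuousWithinAt_iff.mp (hH b hbIcc) ε hε
    set m := min (min δ1 δ2) (b - a) with hmdef
    have hm : 0 < m := lt_min (lt_min hδ1 hδ2) (by linarith)
    have hmba : m ≤ b - a := min_le_right _ _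
    have hmδ : m ≤ min δ1 δ2 := min_le_left _ _
    set b' := b - m/2 with hb'def
    have hb' : b' ∈ Set.Ioo a b := ⟨by simp only [hb'def]; linarith, by simp only [hb'def]; linarith⟩
    have hb'Icc : b' ∈ Set.Icc a b := ⟨hb'.1.le, hb'.2.le⟩
    have hdist : dist b' b < min δ1 δ2 := by
      rw [Real.dist_eq]
      have : |b' - b| = m/2 := by rw [hb'def]; rw [abs_of_nonpos (by linarith)]; ring
      rw [this]
      linarith [lt_min hδ1 hδ2]
    have h1 := hc1 hb'Icc (lt_of_lt_of_le hdist (min_le_left _ _))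
    have h2 := hc2 hb'Icc (lt_of_lt_of_le hdist (min_le_right _ _))
    rw [Real.dist_eq] at h1 h2
    have e1 : φ b ≤ φ b' + ε := by
      have := abs_lt.mp h1
      linarith [this.1]
    have e2 : H b' ≤ H b + ε := by
      have := abs_lt.mp h2
      linarith [this.1, this.2]
    have e3 := step1 ε hε b' hb'
    have e4 : ε * (b' - a) ≤ ε * (b - a) :=
      mul_le_mul_of_nonneg_left (by linarith [hb'.2.le]) hε.le
    linarith
  have hba : (0:ℝ) < b - a + 4 := by linarith
  refine le_of_forall_pos_le_add ?_
  intro ε hε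
  have h := step2 (ε / (b - a + 4)) (by positivity)
  have heq : ε / (b - a + 4) * (b - a) + 4 * (ε / (b - a + 4)) = ε := by
    field_simp
  linarith

lemma gcont (αst μ : ℝ) (hαst : αst ∈ P.idx) (hμ : μ ∈ P.idx) (hlt : αst < μ)
    (T₁ T₂ : ℝ) (w : ℝ → P.V)
    (hw : ∀ r ∈ Set.Ico T₁ T₂, w r ∈ P.B αst)
    (hwc : SContinuousOn (P.nrm αst) w (Set.Ico T₁ T₂))
    (τ' c₀ : ℝ) (hτ'1 : T₁ ≤ τ') (hc₀2 : c₀ < T₂) (hτc : τ' ≤ c₀) :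
    ContinuousOn (fun r => P.nrm μ (P.S μ (c₀ - r) (w r) - P.S μ (c₀ - τ') (w τ')))
      (Set.Icc τ' c₀) := by
  set R := T₂ - T₁ with hRdef
  set CE := P.nu * Real.exp (|P.om| * R) with hCEdef
  have hR0 : 0 ≤ R := by simp only [hRdef]; linarith
  have hCE1 : 1 ≤ CE := P.one_le_CE hR0
  have hCE0 : 0 < CE := lt_of_lt_of_le one_pos hCE1
  have hBC : ∀ u ∈ P.B αst, u ∈ P.C μ := fun u hu =>
    P.D_le_C μ hμ (P.B_le_D αst hαst μ hμ hlt hu)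
  have hIcoW : ∀ r ∈ Set.Icc τ' c₀, r ∈ Set.Ico T₁ T₂ := fun r hr =>
    ⟨le_trans hτ'1 hr.1, lt_of_le_of_lt hr.2 hc₀2⟩
  set g : ℝ → P.V := fun r => P.S μ (c₀ - r) (w r) with hgdef
  have hgC : ∀ r ∈ Set.Icc τ' c₀, g r ∈ P.C μ := by
    intro r hr
    exact P.S_mem μ hμ (c₀ - r) (by linarith [hr.2]) (w r) (hBC _ (hw r (hIcoW r hr)))
  have hgB : ∀ r ∈ Set.Icc τ' c₀, g r ∈ P.B μ := fun r hr => P.C_le_B μ hμ (hgC r hr)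
  intro x hx
  rw [Metric.continuousWithinAt_iff]
  intro ε hε
  have hxI : x ∈ Set.Ico T₁ T₂ := hIcoW x hx
  have hwxB : w x ∈ P.B αst := hw x hxI
  set ε' := ε / (CE * (CE + 2) + 1) with hε'def
  have hε'0 : 0 < ε' := by positivity
  obtain ⟨δw, hδw, hwcont⟩ := hwc x hxI ε' hε'0
  obtain ⟨δs, hδs, hscont⟩ := P.S_cont μ hμ (w x) (hBC _ hwxB) 0 le_rfl ε' hε'0
  have hscont' : ∀ h : ℝ, 0 ≤ h → |h| < δs → P.nrm μ (P.S μ h (w x) - w x) < ε' := by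
    intro h h0 hh
    have := hscont h h0 (by simpa using hh)
    rwa [P.S_id μ hμ (w x) (hBC _ hwxB)] at this
  -- norm of w-differences near x, at level μ
  have hwnear : ∀ y ∈ Set.Icc τ' c₀, |y - x| < δw →
      P.nrm αst (w y - w x) ≤ ε' := by
    intro y hy hyx
    rcases eq_or_ne y x with rfl | hne
    · simp only [sub_self]
      rw [P.nrm_zero αst hαst]
      exact hε'0.le
    · exact (hwcont y (hIcoW y hy) hne hyx).le
  -- the main two-point bound
  have main : ∀ p q : ℝ, p ∈ Set.Icc τ' c₀ → q ∈ Set.Icc τ' c₀ → p ≤ q →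
      |p - x| < δw → |q - x| < δw → q - p < δs →
      P.nrm μ (g p - g q) ≤ CE * (CE * ε' + ε' + ε') := by
    intro p q hp hq hpq hpx hqx hqp
    have hwpB : w p ∈ P.B αst := hw p (hIcoW p hp)
    have hwqB : w q ∈ P.B αst := hw q (hIcoW q hq)
    have hqp0 : 0 ≤ q - p := by linarith
    have hq0 : 0 ≤ c₀ - q := by linarith [hq.2]
    have hid : g p - g q = P.S μ (c₀ - q) (P.S μ (q - p) (w p) - w q) := by
      have h1 := P.S_semigroup μ hμ (c₀ - q) hq0 (q - p) hqp0 (w p) (hBC _ hwpB)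
      have h2 : c₀ - q + (q - p) = c₀ - p := by ring
      rw [h2] at h1
      have h3 := P.S_sub' hμ hq0 (P.S_mem μ hμ (q-p) hqp0 (w p) (hBC _ hwpB)) (hBC _ hwqB)
      simp only [hgdef]
      rw [← h1, h3]
    have hinner : P.nrm μ (P.S μ (q - p) (w p) - w q) ≤ CE * ε' + ε' + ε' := by
      have hsplit : P.S μ (q - p) (w p) - w q =
          P.S μ (q - p) (w p - w x) + (P.S μ (q - p) (w x) - w x) + (w x - w q) := by
        rw [P.S_sub' hμ hqp0 (hBC _ hwpB) (hBC _ hwxB)]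
        abel
      have m1 : P.S μ (q-p) (w p - w x) ∈ P.B μ :=
        P.C_le_B μ hμ (P.S_mem μ hμ (q-p) hqp0 _ (Submodule.sub_mem _ (hBC _ hwpB) (hBC _ hwxB)))
      have m2 : P.S μ (q-p) (w x) - w x ∈ P.B μ := Submodule.sub_mem _
        (P.C_le_B μ hμ (P.S_mem μ hμ (q-p) hqp0 _ (hBC _ hwxB)))
        (P.C_le_B μ hμ (hBC _ hwxB))
      have m3 : w x - w q ∈ P.B μ := Submodule.sub_mem _
        (P.B_mono αst hαst μ hμ hlt.le hwxB) (P.B_mono αst hαst μ hμ hlt.le hwqB)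
      have t1 : P.nrm μ (P.S μ (q-p) (w p - w x)) ≤ CE * ε' := by
        have hb := P.S_boundU hμ hqp0 (show q - p ≤ R by
          simp only [hRdef]; linarith [hp.1, hq.2]) (Submodule.sub_mem _ (hBC _ hwpB) (hBC _ hwxB))
        have hmono : P.nrm μ (w p - w x) ≤ P.nrm αst (w p - w x) :=
          P.nrm_mono αst hαst μ hμ hlt.le _ (Submodule.sub_mem _ hwpB hwxB)
        have hsm : P.nrm αst (w p - w x) ≤ ε' := hwnear p hp hpx
        calc P.nrm μ (P.S μ (q-p) (w p - w x)) ≤ CE * P.nrm μ (w p - w x) := hb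
        _ ≤ CE * ε' := mul_le_mul_of_nonneg_left (le_trans hmono hsm) hCE0.le
      have t2 : P.nrm μ (P.S μ (q-p) (w x) - w x) ≤ ε' := by
        rcases eq_or_lt_of_le hqp0 with h | h
        · rw [← h]
          rw [P.S_id μ hμ (w x) (hBC _ hwxB)]
          simp only [sub_self]
          rw [P.nrm_zero μ hμ]; exact hε'0.le
        · exact (hscont' (q-p) hqp0 (by rw [abs_of_nonneg hqp0]; exact hqp)).le
      have t3 : P.nrm μ (w x - w q) ≤ ε' := by
        have hmono : P.nrm μ (w x - w q) ≤ P.nrm αst (w x - w q) :=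
          P.nrm_mono αst hαst μ hμ hlt.le _ (Submodule.sub_mem _ hwxB hwqB)
        have hswap : P.nrm αst (w x - w q) = P.nrm αst (w q - w x) := by
          rw [← neg_sub (w q) (w x), P.nrm_neg' hαst (Submodule.sub_mem _ hwqB hwxB)]
        exact hmono.trans (by rw [hswap]; exact hwnear q hq hqx)
      calc P.nrm μ (P.S μ (q - p) (w p) - w q)
          ≤ P.nrm μ (P.S μ (q-p) (w p - w x) + (P.S μ (q-p) (w x) - w x)) + P.nrm μ (w x - w q) := by
            rw [hsplit]
            exact P.nrm_add μ hμ _ (Submodule.add_mem _ m1 m2) _ m3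
        _ ≤ (P.nrm μ (P.S μ (q-p) (w p - w x)) + P.nrm μ (P.S μ (q-p) (w x) - w x)) + P.nrm μ (w x - w q) := by
            linarith [P.nrm_add μ hμ _ m1 _ m2]
        _ ≤ CE * ε' + ε' + ε' := by linarith
    have houter : P.nrm μ (g p - g q) ≤ CE * P.nrm μ (P.S μ (q - p) (w p) - w q) := by
      rw [hid]
      exact P.S_boundU hμ hq0 (by simp only [hRdef]; linarith [hq.1]) (Submodule.sub_mem _
        (P.S_mem μ hμ (q-p) hqp0 _ (hBC _ hwpB)) (hBC _ hwqB))
    calc P.nrm μ (g p - g q) ≤ CE * P.nrm μ (P.S μ (q - p) (w p) - w q) := houter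
    _ ≤ CE * (CE * ε' + ε' + ε') := mul_le_mul_of_nonneg_left hinner hCE0.le
  refine ⟨min δw δs, lt_min hδw hδs, ?_⟩
  intro y hy hyx
  rw [Real.dist_eq] at hyx
  have hyδw : |y - x| < δw := lt_of_lt_of_le hyx (min_le_left _ _)
  have hyδs : |y - x| < δs := lt_of_lt_of_le hyx (min_le_right _ _)
  have hxx : |x - x| < δw := by simpa using hδw
  have hbound : P.nrm μ (g y - g x) ≤ CE * (CE * ε' + ε' + ε') := by
    rcases le_total y x with h | h
    · have := main y x hy hx h hyδw hxx (by rw [abs_of_nonpos (by linarith)] at hyδs; linarith)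
      exact this
    · have hm := main x y hx hy h hxx hyδw (by rw [abs_of_nonneg (by linarith)] at hyδs; linarith)
      have hmem : g x - g y ∈ P.B μ := Submodule.sub_mem _ (hgB x hx) (hgB y hy)
      have : P.nrm μ (g y - g x) = P.nrm μ (g x - g y) := by
        rw [← P.nrm_neg' hμ hmem, neg_sub]
      rw [this]; exact hm
  have heps : (CE * (CE + 2) + 1) * ε' = ε := by
    rw [hε'def]; field_simp
  have hfin : CE * (CE * ε' + ε' + ε') < ε := by nlinarith
  rw [Real.dist_eq]
  have hτ'B : g τ' ∈ P.B μ := hgB τ' ⟨le_rfl, hτc⟩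
  have habs := P.abs_nrm_sub_nrm_le hμ
    (Submodule.sub_mem _ (hgB y hy) hτ'B)
    (Submodule.sub_mem _ (hgB x hx) hτ'B)
  rw [sub_sub_sub_cancel_right] at habs
  change |P.nrm μ (g y - g τ') - P.nrm μ (g x - g τ')| < ε
  calc |P.nrm μ (g y - g τ') - P.nrm μ (g x - g τ')| ≤ P.nrm μ (g y - g x) := habs
  _ ≤ CE * (CE * ε' + ε' + ε') := hbound
  _ < ε := hfin

set_option maxHeartbeats 3000000 in
lemma vanish (αst β : ℝ) (hαst : αst ∈ P.idx) (hβ : β ∈ P.idx) (hab : αst < β)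
    (T₁ T₂ : ℝ) (hT12 : T₁ < T₂) (w : ℝ → P.V)
    (hw : ∀ r ∈ Set.Ico T₁ T₂, w r ∈ P.B αst)
    (hwc : SContinuousOn (P.nrm αst) w (Set.Ico T₁ T₂))
    (hAZ : ∀ r ∈ Set.Ioo T₁ T₂, P.A (w r) ∈ P.B αst ∧ P.Z (w r) ∈ P.B αst)
    (hderiv : ∀ r ∈ Set.Ioo T₁ T₂,
      SHasDerivWithin (P.nrm αst) w (Set.Ico T₁ T₂) r (P.A (w r) + P.Z (w r)))
    (h0 : w T₁ = 0) : ∀ t ∈ Set.Ico T₁ T₂, w t = 0 := by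
  set R := T₂ - T₁ with hRdef
  have hR0 : 0 < R := by simp only [hRdef]; linarith only [hT12]
  set CE := P.nu * Real.exp (|P.om| * R) with hCEdef
  have hCE1 : 1 ≤ CE := P.one_le_CE hR0.le
  have hCE0 : 0 < CE := lt_of_lt_of_le one_pos hCE1
  have hM0 : 0 < P.M β := P.M_pos β hβ
  have hN0 : 0 < P.Nf β := P.N_pos β hβ
  have hba0 : 0 < β - αst := by linarith
  set Q := CE * (P.M β / (β - αst) + P.Nf β) with hQdef
  have hQ0 : 0 < Q := mul_pos hCE0 (add_pos (div_pos hM0 hba0) hN0)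
  set Δ := 1 / (2 * Real.exp 1 * Q) with hΔdef
  have hΔ0 : 0 < Δ :=
    div_pos one_pos (mul_pos (mul_pos two_pos (Real.exp_pos 1)) hQ0)
  have loc : ∀ τ', T₁ ≤ τ' → τ' < T₂ → w τ' = 0 →
      ∀ t, τ' ≤ t → t < T₂ → t ≤ τ' + Δ → w t = 0 := by
    intro τ' hτ'1 hτ'2 h0' t hτt htT2 htΔ
    rcases eq_or_lt_of_le hτt with rfl | hτt'
    · exact h0'
    have hIcoW : ∀ r ∈ Set.Icc τ' t, r ∈ Set.Ico T₁ T₂ := fun r hr =>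
      ⟨le_trans hτ'1 hr.1, lt_of_le_of_lt hr.2 htT2⟩
    have hwB : ∀ r ∈ Set.Icc τ' t, w r ∈ P.B αst := fun r hr => hw r (hIcoW r hr)
    have hcont : ContinuousOn (fun c => P.nrm αst (w c)) (Set.Icc τ' t) := by
      intro x hx
      rw [Metric.continuousWithinAt_iff]
      intro ε hε
      obtain ⟨δ, hδ, hc⟩ := hwc x (hIcoW x hx) ε hε
      refine ⟨δ, hδ, ?_⟩
      intro y hy hyx
      rw [Real.dist_eq]
      have habs := P.abs_nrm_sub_nrm_le hαst (hwB y hy) (hwB x hx)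
      rcases eq_or_ne y x with rfl | hne
      · simpa using hε
      · exact lt_of_le_of_lt habs (hc y (hIcoW y hy) hne (by rwa [Real.dist_eq] at hyx))
    obtain ⟨xm, hxmIcc, hxmax'⟩ :=
      isCompact_Icc.exists_isMaxOn (Set.nonempty_Icc.mpr hτt'.le) hcont
    have hxmax : ∀ c ∈ Set.Icc τ' t, P.nrm αst (w c) ≤ P.nrm αst (w xm) :=
      fun c hc => hxmax' hc
    set K := P.nrm αst (w xm) with hKdef
    have hKb : ∀ c ∈ Set.Icc τ' t, P.nrm αst (w c) ≤ K := hxmax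
    have hτ'Icc : τ' ∈ Set.Icc τ' t := Set.left_mem_Icc.mpr hτt'.le
    have hK0 : 0 ≤ K :=
      le_trans (P.nrm_nonneg αst hαst _ (hwB τ' hτ'Icc)) (hKb τ' hτ'Icc)
    have iter : ∀ n : ℕ, 1 ≤ n → P.nrm β (w t) ≤ K / 2 ^ n := by
      intro n hn
      have hn0 : (0:ℝ) < n := by exact_mod_cast hn
      have hn1 : (1:ℝ) ≤ n := by exact_mod_cast hn
      set δn := (β - αst) / n with hδndef
      have hδn0 : 0 < δn := div_pos hba0 hn0
      set γ : ℕ → ℝ := fun k => αst + k * δn with hγdef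
      have hγle : ∀ k : ℕ, k ≤ n → γ k ≤ β := by
        intro k hk
        have h1 : (k:ℝ) * δn ≤ n * δn :=
          mul_le_mul_of_nonneg_right (by exact_mod_cast hk) hδn0.le
        have h2 : (n:ℝ) * δn = β - αst := by
          rw [hδndef]; field_simp
        simp only [hγdef]; linarith only [h1, h2]
      have hγlow : ∀ k : ℕ, αst ≤ γ k := by
        intro k
        simp only [hγdef]
        have h1 : 0 ≤ (k:ℝ) * δn := mul_nonneg (Nat.cast_nonneg k) hδn0.le
        linarith only [h1]
      have hγidx : ∀ k : ℕ, k ≤ n → γ k ∈ P.idx :=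
        fun k hk => P.mem_idx_between hβ (lt_of_lt_of_le (P.idx_low hαst) (hγlow k)) (hγle k hk)
      have hγlt : ∀ k : ℕ, αst < γ (k+1) := by
        intro k
        simp only [hγdef]
        push_cast
        have h1 : 0 < ((k:ℝ) + 1) * δn := mul_pos (by positivity) hδn0
        linarith only [h1]
      have hγsucc : ∀ k : ℕ, γ (k+1) - γ k = δn := by
        intro k; simp only [hγdef]; push_cast; ring
      set L := CE * (P.M β / δn + P.Nf β) with hLdef
      have hL0 : 0 < L := mul_pos hCE0 (add_pos (div_pos hM0 hδn0) hN0)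
      have hind : ∀ k : ℕ, k ≤ n → ∀ c ∈ Set.Icc τ' t,
          P.nrm (γ k) (w c) ≤ K * L ^ k * (c - τ') ^ k / (k.factorial : ℝ) := by
        intro k
        induction k with
        | zero =>
          intro _ c hc
          have hγ0 : γ 0 = αst := by simp [hγdef]
          rw [hγ0]
          simpa using hKb c hc
        | succ k ih =>
          intro hk c₀ hc₀
          have hkn : k ≤ n := Nat.le_of_succ_le hk
          have ihk := ih hkn
          set μ := γ (k+1) with hμdef
          have hμidx : μ ∈ P.idx := hγidx (k+1) hk
          have hαμ : αst < μ := hγlt k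
          have hBC : ∀ u ∈ P.B αst, u ∈ P.C μ := fun u hu =>
            P.D_le_C μ hμidx (P.B_le_D αst hαst μ hμidx hαμ hu)
          have hBD : ∀ u ∈ P.B αst, u ∈ P.D μ := fun u hu =>
            P.B_le_D αst hαst μ hμidx hαμ hu
          have hBμ : ∀ u ∈ P.B αst, u ∈ P.B μ := fun u hu =>
            P.B_mono αst hαst μ hμidx hαμ.le hu
          have hfne : ((k.factorial : ℝ)) ≠ 0 := Nat.cast_ne_zero.mpr (Nat.factorial_ne_zero k)
          have hfne1 : (((k+1).factorial : ℝ)) ≠ 0 := Nat.cast_ne_zero.mpr (Nat.factorial_ne_zero (k+1))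
          rcases eq_or_lt_of_le hc₀.1 with heq | hτc₀
          · rw [← heq, h0', P.nrm_zero μ hμidx]
            rw [sub_self, zero_pow (Nat.succ_ne_zero k), mul_zero, zero_div]
          · have hc₀T₂ : c₀ < T₂ := lt_of_le_of_lt hc₀.2 htT2
            have hc₀Ico : c₀ ∈ Set.Ico T₁ T₂ := ⟨le_trans hτ'1 hc₀.1, hc₀T₂⟩
            set H : ℝ → ℝ := fun r => K * L^(k+1) / (((k+1).factorial : ℕ) : ℝ) * (r - τ')^(k+1)
              with hHdef
            have hgBmem : ∀ r ∈ Set.Icc τ' c₀, P.S μ (c₀ - r) (w r) ∈ P.B μ := by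
              intro r hr
              apply P.C_le_B μ hμidx
              exact P.S_mem μ hμidx (c₀ - r) (by linarith [hr.2]) (w r)
                (hBC _ (hw r ⟨le_trans hτ'1 hr.1, lt_of_le_of_lt hr.2 hc₀T₂⟩))
            have hphi : ContinuousOn
                (fun r => P.nrm μ (P.S μ (c₀ - r) (w r) - P.S μ (c₀ - τ') (w τ')))
                (Set.Icc τ' c₀) :=
              P.gcont αst μ hαst hμidx hαμ T₁ T₂ w hw hwc τ' c₀ hτ'1 hc₀T₂ hτc₀.le
            have hHc : ContinuousOn H (Set.Icc τ' c₀) := by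
              rw [hHdef]
              exact (continuous_const.mul
                ((continuous_id.sub continuous_const).pow (k+1))).continuousOn
            have hkey : ∀ c ∈ Set.Ioo τ' c₀, ∀ ε > 0, ∃ δ > 0, ∀ r ∈ Set.Ico τ' c,
                c - r < δ → P.nrm μ (P.S μ (c₀ - c) (w c) - P.S μ (c₀ - r) (w r))
                  ≤ H c - H r + ε * (c - r) := by
              intro c hc ε hε
              have hcI : c ∈ Set.Ioo T₁ T₂ :=
                ⟨lt_of_le_of_lt hτ'1 hc.1, lt_trans hc.2 hc₀T₂⟩
              have hcIco : c ∈ Set.Ico T₁ T₂ := ⟨hcI.1.le, hcI.2⟩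
              have hwcB : w c ∈ P.B αst := hw c hcIco
              obtain ⟨hA, hZ⟩ := hAZ c hcI
              have hvB : P.A (w c) + P.Z (w c) ∈ P.B αst := Submodule.add_mem _ hA hZ
              set bnd := K * L ^ k * (c - τ') ^ k / (k.factorial : ℝ) with hbnddef
              have hbnd0 : 0 ≤ bnd := by
                rw [hbnddef]
                have h1 : (0:ℝ) ≤ (c - τ') ^ k := pow_nonneg (by linarith [hc.1]) k
                have h2 : (0:ℝ) < (k.factorial : ℝ) := by exact_mod_cast Nat.factorial_pos k
                positivity
              have hZb : P.nrm μ (P.Z (w c)) ≤ (L / CE) * bnd := by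
                have hwk : w c ∈ P.B (γ k) :=
                  P.B_mono αst hαst (γ k) (hγidx k hkn) (hγlow k) hwcB
                have hkk1 : γ k < γ (k+1) := by
                  have h1 := hγsucc k; linarith only [h1, hδn0]
                have hzb := P.Z_bound β hβ (γ k) (γ (k+1))
                  (lt_of_lt_of_le (P.idx_low hαst) (hγlow k)) hkk1
                  (hγle (k+1) hk) (w c) hwk
                rw [hγsucc k] at hzb
                have hLC : P.M β / δn + P.Nf β = L / CE := by
                  rw [hLdef, mul_comm, mul_div_assoc, div_self hCE0.ne', mul_one]
                rw [hLC] at hzb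
                have hik := ihk c ⟨hc.1.le, le_trans hc.2.le hc₀.2⟩
                calc P.nrm μ (P.Z (w c)) ≤ L / CE * P.nrm (γ k) (w c) := hzb
                _ ≤ L / CE * bnd := by
                    rw [hbnddef]
                    exact mul_le_mul_of_nonneg_left hik (div_nonneg hL0.le hCE0.le)
              set ε₁ := ε / (4 * CE) with hε₁def
              have hε₁0 : 0 < ε₁ := div_pos hε (by linarith only [hCE0])
              set ε₂ := ε / (4 * CE * CE) with hε₂def
              have hε₂0 : 0 < ε₂ := div_pos hε (mul_pos (by linarith only [hCE0]) hCE0)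
              set ε₃ := ε / (4 * CE) with hε₃def
              have hε₃0 : 0 < ε₃ := div_pos hε (by linarith only [hCE0])
              obtain ⟨δ₁, hδ₁, hgen⟩ := P.S_gen μ hμidx (w c) (hBD _ hwcB) ε₁ hε₁0
              obtain ⟨δ₂, hδ₂, hder⟩ := hderiv c hcI ε₂ hε₂0
              obtain ⟨δ₃, hδ₃, hsc⟩ := P.S_cont μ hμidx (P.A (w c) + P.Z (w c))
                (hBC _ hvB) 0 le_rfl ε₃ hε₃0
              set d := L * bnd with hddef
              have hHd : HasDerivAt H d c := by
                rw [hHdef]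
                have h1 : HasDerivAt (fun r : ℝ => (r - τ') ^ (k+1))
                    (((k:ℝ)+1) * (c - τ') ^ k) c := by
                  have h2 := ((hasDerivAt_id c).sub_const τ').pow (k+1)
                  norm_num at h2
                  exact h2
                have h3 := h1.const_mul (K * L^(k+1) / (((k+1).factorial : ℕ) : ℝ))
                refine h3.congr_deriv ?_
                rw [hddef, hbnddef]
                push_cast [Nat.factorial_succ]
                field_simp
                ring
              obtain ⟨δ₄, hδ₄, hHest⟩ := by
                have hlo := hasDerivAt_iff_isLittleO.mp hHd
                rw [Asymptotics.isLittleO_iff] at hlo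
                have hlo2 := hlo (show (0:ℝ) < ε/4 by linarith)
                rw [Metric.eventually_nhds_iff] at hlo2
                exact hlo2
              refine ⟨min (min δ₁ δ₂) (min δ₃ δ₄),
                lt_min (lt_min hδ₁ hδ₂) (lt_min hδ₃ hδ₄), ?_⟩
              intro r hr hcrδ
              set h := c - r with hhdef
              have hh0 : 0 < h := by rw [hhdef]; linarith only [hr.2]
              have hhδ₁ : h < δ₁ :=
                lt_of_lt_of_le hcrδ (le_trans (min_le_left _ _) (min_le_left _ _))
              have hhδ₂ : h < δ₂ :=
                lt_of_lt_of_le hcrδ (le_trans (min_le_left _ _) (min_le_right _ _))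
              have hhδ₃ : h < δ₃ :=
                lt_of_lt_of_le hcrδ (le_trans (min_le_right _ _) (min_le_left _ _))
              have hhδ₄ : h < δ₄ :=
                lt_of_lt_of_le hcrδ (le_trans (min_le_right _ _) (min_le_right _ _))
              have hrIco : r ∈ Set.Ico T₁ T₂ := ⟨le_trans hτ'1 hr.1, lt_trans hr.2 hcI.2⟩
              have hwrB : w r ∈ P.B αst := hw r hrIco
              have hScw : P.S μ h (w r) ∈ P.C μ := P.S_mem μ hμidx h hh0.le _ (hBC _ hwrB)
              have hc₀c : (0:ℝ) ≤ c₀ - c := by linarith only [hc.2]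
              have habsrc : |r - c| = h := by
                rw [abs_of_neg (sub_neg.mpr hr.2), hhdef]; ring
              have hrcne : r - c ≠ 0 := (sub_neg.mpr hr.2).ne
              have hrcmh : r - c = -h := by rw [hhdef]; ring
              set X := w c - P.S μ h (w r) with hXdef
              have hXC : X ∈ P.C μ := by
                rw [hXdef]; exact Submodule.sub_mem _ (hBC _ hwcB) hScw
              have hgid : P.S μ (c₀ - c) (w c) - P.S μ (c₀ - r) (w r) = P.S μ (c₀ - c) X := by
                rw [hXdef]
                have h1 := P.S_semigroup μ hμidx (c₀ - c) hc₀c h hh0.le (w r) (hBC _ hwrB)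
                have h2 : c₀ - c + h = c₀ - r := by rw [hhdef]; ring
                rw [h2] at h1
                rw [P.S_sub' hμidx hc₀c (hBC _ hwcB) hScw, h1]
              set T1 := P.S μ h (w c) - w c - h • P.A (w c) with hT1def
              set W2 := w r - w c - (r - c) • (P.A (w c) + P.Z (w c)) with hW2def
              set T3 := P.S μ h (P.A (w c) + P.Z (w c)) - (P.A (w c) + P.Z (w c)) with hT3def
              have hW2B : W2 ∈ P.B αst := by
                rw [hW2def]
                exact Submodule.sub_mem _ (Submodule.sub_mem _ hwrB hwcB)
                  (Submodule.smul_mem _ _ hvB)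
              have hSW2 : P.S μ h W2 =
                  P.S μ h (w r) - P.S μ h (w c) - (r - c) • P.S μ h (P.A (w c) + P.Z (w c)) := by
                rw [hW2def,
                  P.S_sub' hμidx hh0.le (Submodule.sub_mem _ (hBC _ hwrB) (hBC _ hwcB))
                    (Submodule.smul_mem _ _ (hBC _ hvB)),
                  P.S_sub' hμidx hh0.le (hBC _ hwrB) (hBC _ hwcB),
                  P.S_smul μ hμidx h hh0.le (r - c) _ (hBC _ hvB)]
              have hdecomp : X = h • P.Z (w c) - T1 - P.S μ h W2 + h • T3 := by
                rw [hXdef, hT1def, hSW2, hT3def, hrcmh]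
                simp only [neg_smul, smul_add, smul_sub]
                abel
              -- memberships at level μ
              have mz : h • P.Z (w c) ∈ P.B μ := Submodule.smul_mem _ _ (hBμ _ hZ)
              have mShwc : P.S μ h (w c) ∈ P.B μ :=
                P.C_le_B μ hμidx (P.S_mem μ hμidx h hh0.le _ (hBC _ hwcB))
              have mT1 : T1 ∈ P.B μ := by
                rw [hT1def]
                exact Submodule.sub_mem _ (Submodule.sub_mem _ mShwc (hBμ _ hwcB))
                  (Submodule.smul_mem _ _ (hBμ _ hA))
              have mSW2 : P.S μ h W2 ∈ P.B μ :=
                P.C_le_B μ hμidx (P.S_mem μ hμidx h hh0.le _ (hBC _ hW2B))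
              have mT3 : h • T3 ∈ P.B μ := by
                rw [hT3def]
                exact Submodule.smul_mem _ _ (Submodule.sub_mem _
                  (P.C_le_B μ hμidx (P.S_mem μ hμidx h hh0.le _ (hBC _ hvB))) (hBμ _ hvB))
              -- individual bounds
              have b1 : P.nrm μ T1 ≤ h * ε₁ := by
                have hmem1 : h⁻¹ • (P.S μ h (w c) - w c) - P.A (w c) ∈ P.B μ :=
                  Submodule.sub_mem _
                    (Submodule.smul_mem _ _ (Submodule.sub_mem _ mShwc (hBμ _ hwcB)))
                    (hBμ _ hA)
                have hslope : h • (h⁻¹ • (P.S μ h (w c) - w c) - P.A (w c)) = T1 := by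
                  rw [smul_sub, smul_smul, mul_inv_cancel₀ hh0.ne', one_smul, hT1def]
                rw [← hslope, P.nrm_smul μ hμidx h _ hmem1, abs_of_pos hh0]
                exact mul_le_mul_of_nonneg_left (hgen h hh0 hhδ₁).le hh0.le
              have b2 : P.nrm μ (P.S μ h W2) ≤ CE * (h * ε₂) := by
                have hmem2 : (r - c)⁻¹ • (w r - w c) - (P.A (w c) + P.Z (w c)) ∈ P.B αst :=
                  Submodule.sub_mem _
                    (Submodule.smul_mem _ _ (Submodule.sub_mem _ hwrB hwcB)) hvB
                have hW2eq : (r - c) • ((r - c)⁻¹ • (w r - w c) - (P.A (w c) + P.Z (w c)))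
                    = W2 := by
                  rw [smul_sub, smul_smul, mul_inv_cancel₀ hrcne, one_smul, hW2def]
                have hder' := hder r hrIco (sub_ne_zero.mp hrcne) (by rw [habsrc] at *; exact hhδ₂)
                have hnrmW2 : P.nrm αst W2 ≤ h * ε₂ := by
                  rw [← hW2eq, P.nrm_smul αst hαst (r - c) _ hmem2, habsrc]
                  exact mul_le_mul_of_nonneg_left hder'.le hh0.le
                have hbd := P.S_boundU hμidx hh0.le
                  (show h ≤ R by rw [hhdef, hRdef]; linarith only [hr.1, hcI.2, hτ'1]) (hBC _ hW2B)
                have hmono : P.nrm μ W2 ≤ P.nrm αst W2 :=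
                  P.nrm_mono αst hαst μ hμidx hαμ.le _ hW2B
                calc P.nrm μ (P.S μ h W2) ≤ CE * P.nrm μ W2 := hbd
                _ ≤ CE * (h * ε₂) :=
                    mul_le_mul_of_nonneg_left (le_trans hmono hnrmW2) hCE0.le
              have b3 : P.nrm μ (h • T3) ≤ h * ε₃ := by
                have hsc' : P.nrm μ T3 < ε₃ := by
                  have hh := hsc h hh0.le (by rw [sub_zero, abs_of_pos hh0]; exact hhδ₃)
                  rw [P.S_id μ hμidx _ (hBC _ hvB)] at hh
                  rw [hT3def]
                  exact hh
                have hmem3 : T3 ∈ P.B μ := by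
                  rw [hT3def]
                  exact Submodule.sub_mem _
                    (P.C_le_B μ hμidx (P.S_mem μ hμidx h hh0.le _ (hBC _ hvB))) (hBμ _ hvB)
                rw [P.nrm_smul μ hμidx h _ hmem3, abs_of_pos hh0]
                exact mul_le_mul_of_nonneg_left hsc'.le hh0.le
              have b4 : P.nrm μ (h • P.Z (w c)) ≤ h * ((L / CE) * bnd) := by
                rw [P.nrm_smul μ hμidx h _ (hBμ _ hZ), abs_of_pos hh0]
                exact mul_le_mul_of_nonneg_left hZb hh0.le
              -- combine
              have hXbound : P.nrm μ X ≤
                  h * ((L / CE) * bnd) + h * ε₁ + CE * (h * ε₂) + h * ε₃ := by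
                rw [hdecomp]
                have s1 := P.nrm_sub_le' hμidx mz mT1
                have s2 := P.nrm_sub_le' hμidx (Submodule.sub_mem _ mz mT1) mSW2
                have s3 := P.nrm_add μ hμidx _
                  (Submodule.sub_mem _ (Submodule.sub_mem _ mz mT1) mSW2) _ mT3
                calc P.nrm μ (h • P.Z (w c) - T1 - P.S μ h W2 + h • T3)
                    ≤ P.nrm μ (h • P.Z (w c) - T1 - P.S μ h W2) + P.nrm μ (h • T3) := s3
                _ ≤ (P.nrm μ (h • P.Z (w c) - T1) + P.nrm μ (P.S μ h W2)) +
                      P.nrm μ (h • T3) := add_le_add_left s2 _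
                _ ≤ ((P.nrm μ (h • P.Z (w c)) + P.nrm μ T1) + P.nrm μ (P.S μ h W2)) +
                      P.nrm μ (h • T3) := add_le_add_left (add_le_add_left s1 _) _
                _ ≤ h * (L / CE * bnd) + h * ε₁ + CE * (h * ε₂) + h * ε₃ :=
                      add_le_add (add_le_add (add_le_add b4 b1) b2) b3
              have houter : P.nrm μ (P.S μ (c₀ - c) X) ≤ CE * P.nrm μ X :=
                P.S_boundU hμidx hc₀c
                  (show c₀ - c ≤ R by rw [hRdef]; linarith only [hcI.1, hc₀T₂]) hXC
              have hHest' : h * d - ε/4 * h ≤ H c - H r := by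
                have hdy := hHest (show dist r c < δ₄ by rw [Real.dist_eq, habsrc]; exact hhδ₄)
                rw [Real.norm_eq_abs, Real.norm_eq_abs, smul_eq_mul, hrcmh] at hdy
                have habs2 : |r - c| = h := habsrc
                rw [hrcmh] at habs2
                rw [habs2] at hdy
                have h5 := (abs_le.mp hdy).2
                linarith only [h5]
              calc P.nrm μ (P.S μ (c₀ - c) (w c) - P.S μ (c₀ - r) (w r))
                  = P.nrm μ (P.S μ (c₀ - c) X) := by rw [hgid]
              _ ≤ CE * P.nrm μ X := houter
              _ ≤ CE * (h * ((L / CE) * bnd) + h * ε₁ + CE * (h * ε₂) + h * ε₃) :=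
                  mul_le_mul_of_nonneg_left hXbound hCE0.le
              _ = h * d + (h * (ε/4) + h * (ε/4) + h * (ε/4)) := by
                  rw [hddef, hε₁def, hε₂def, hε₃def]
                  field_simp
                  ring
              _ ≤ H c - H r + ε * h := by linarith only [hHest']
            have hwτ'B : w τ' ∈ P.B αst := hw τ' ⟨hτ'1, hτ'2⟩
            have hwc₀B : w c₀ ∈ P.B αst := hw c₀ hc₀Ico
            have hmvt : P.nrm μ (P.S μ (c₀ - c₀) (w c₀) - P.S μ (c₀ - τ') (w τ')) ≤
                H c₀ - H τ' :=
              P.mvt μ hμidx (fun r => P.S μ (c₀ - r) (w r)) H τ' c₀ hτc₀ hgBmem hphi hHc hkey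
            rw [sub_self, P.S_id μ hμidx _ (hBC _ hwc₀B), h0',
              P.S_zero' hμidx (by linarith only [hτc₀] : (0:ℝ) ≤ c₀ - τ'), sub_zero] at hmvt
            have hHτ' : H τ' = 0 := by
              rw [hHdef]; simp
            rw [hHτ', sub_zero] at hmvt
            refine le_trans hmvt ?_
            rw [hHdef]
            exact le_of_eq (by ring)
          -- end succ
      have hfinb := hind n le_rfl t (Set.right_mem_Icc.mpr hτt'.le)
      have hγn : γ n = β := by
        simp only [hγdef, hδndef]
        field_simp
        ring
      rw [hγn] at hfinb
      have htτ0 : 0 ≤ t - τ' := by linarith only [hτt']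
      have hudef : P.M β / δn = (n:ℝ) * (P.M β / (β - αst)) := by
        rw [hδndef]; field_simp
      have hLn : L ≤ n * Q := by
        rw [hLdef, hQdef, hudef]
        have hkey2 : 0 ≤ CE * P.Nf β * ((n:ℝ) - 1) :=
          mul_nonneg (mul_pos hCE0 hN0).le (by linarith only [hn1])
        nlinarith [hkey2]
      have hLt : L * (t - τ') ≤ n / (2 * Real.exp 1) := by
        have h1 : L * (t - τ') ≤ (n * Q) * Δ :=
          mul_le_mul hLn (by linarith only [htΔ]) htτ0
            (mul_nonneg (Nat.cast_nonneg n) hQ0.le)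
        have h2 : (n * Q) * Δ = n / (2 * Real.exp 1) := by
          rw [hΔdef]
          field_simp
        linarith only [h1, h2]
      have hp1 : (L * (t - τ'))^n ≤ ((n:ℝ) / (2 * Real.exp 1))^n :=
        pow_le_pow_left₀ (mul_nonneg hL0.le htτ0) hLt n
      have hp2 : ((n:ℝ) / (2 * Real.exp 1))^n ≤ (n.factorial : ℝ) / 2^n := by
        rw [div_pow, mul_pow]
        have hps := pow_self_le n
        rw [div_le_div_iff₀ (by positivity) (by positivity)]
        calc (n:ℝ)^n * 2^n ≤ (Real.exp 1^n * n.factorial) * 2^n :=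
              mul_le_mul_of_nonneg_right hps (by positivity)
        _ = n.factorial * (2^n * Real.exp 1^n) := by ring
      have hfq : (0:ℝ) < (n.factorial : ℝ) := by exact_mod_cast Nat.factorial_pos n
      have hfin2 : K * L^n * (t - τ')^n / (n.factorial : ℝ) ≤ K / 2^n := by
        rw [div_le_div_iff₀ hfq (by positivity : (0:ℝ) < (2:ℝ)^n)]
        have hh := le_trans hp1 hp2
        have e : (L*(t-τ'))^n = L^n * (t-τ')^n := mul_pow _ _ _
        calc K * L^n * (t-τ')^n * 2^n = K * ((L*(t-τ'))^n * 2^n) := by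
              rw [e]; ring
        _ ≤ K * ((n.factorial / 2^n) * 2^n) := by
            apply mul_le_mul_of_nonneg_left _ hK0
            exact mul_le_mul_of_nonneg_right hh (by positivity)
        _ = K * n.factorial := by
            rw [div_mul_cancel₀ ((n.factorial : ℝ)) (pow_pos (two_pos) n).ne']
      exact le_trans hfinb hfin2
    -- conclude w t = 0
    have htIco : t ∈ Set.Ico T₁ T₂ := ⟨le_trans hτ'1 hτt'.le, htT2⟩
    have hwtB : w t ∈ P.B β := P.B_mono αst hαst β hβ hab.le (hw t htIco)
    have hn0 : P.nrm β (w t) = 0 := by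
      by_contra hne
      have hpos : 0 < P.nrm β (w t) :=
        lt_of_le_of_ne (P.nrm_nonneg β hβ _ hwtB) (Ne.symm hne)
      obtain ⟨n, hn⟩ := pow_unbounded_of_one_lt (K / P.nrm β (w t)) (one_lt_two (α := ℝ))
      have h1 := iter (n+1) (by omega)
      have h2 : K / 2^(n+1) < P.nrm β (w t) := by
        rw [div_lt_iff₀ (by positivity)]
        rw [div_lt_iff₀ hpos] at hn
        have h2n : (2:ℝ)^n ≤ 2^(n+1) := by
          apply pow_le_pow_right₀ one_le_two (Nat.le_succ n)
        have h3 : 0 ≤ ((2:ℝ)^(n+1) - 2^n) * P.nrm β (w t) :=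
          mul_nonneg (by linarith only [h2n]) hpos.le
        nlinarith [h3, hn]
      exact absurd h1 (not_le.mpr h2)
    exact P.nrm_eq_zero β hβ (w t) hwtB hn0
  -- bootstrap
  have main : ∀ m : ℕ, ∀ t ∈ Set.Ico T₁ T₂, t ≤ T₁ + m * Δ → w t = 0 := by
    intro m
    induction m with
    | zero =>
      intro t ht hle
      have het : t = T₁ := le_antisymm (by simpa using hle) ht.1
      rw [het]; exact h0
    | succ m ih =>
      intro t ht hle
      by_cases hcase : t ≤ T₁ + m * Δ
      · exact ih t ht hcase
      · push_neg at hcase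
        have hτ'1 : T₁ ≤ T₁ + m * Δ := by
          have h1 : 0 ≤ (m:ℝ) * Δ := mul_nonneg (Nat.cast_nonneg m) hΔ0.le
          linarith only [h1]
        have hτ'2 : T₁ + m * Δ < T₂ := lt_trans hcase ht.2
        have h0' : w (T₁ + m * Δ) = 0 := ih (T₁ + m * Δ) ⟨hτ'1, hτ'2⟩ le_rfl
        apply loc (T₁ + m * Δ) hτ'1 hτ'2 h0' t hcase.le ht.2
        push_cast at hle
        linarith only [hle]
  intro t ht
  obtain ⟨m, hm⟩ := exists_nat_ge ((t - T₁) / Δ)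
  apply main m t ht
  rw [div_le_iff₀ hΔ0] at hm
  linarith only [hm]

end OvsSystem


/-- **Theorem (uniqueness).** Under Assumptions 1–3, let `α* ∈ I`, `T > 0`, `s ≥ 0`,
`τ ∈ [s, s+T)`, and let `u₁, u₂ : [τ, s+T) → B_{α*}` be continuous functions solving
`d/dt u = Au + Zu` on `(τ, s+T)` in `B_{α*}`. If there is `α_τ ∈ (α̲, α*)` with
`τ + T(α_τ, α*) ≥ s + T` and `u₁(τ) = u₂(τ) ∈ B_{α_τ}`, then `u₁(t) = u₂(t)` in
`B_{α*}` for all `t ∈ (τ, s+T)`. -/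
theorem uniqueness_in_scale (P : OvsSystem) (αst : ℝ) (hαst : αst ∈ P.idx)
    (T : ℝ) (hT : 0 < T) (s : ℝ) (hs : 0 ≤ s) (τ : ℝ) (hτ : τ ∈ Set.Ico s (s + T))
    (u₁ u₂ : ℝ → P.V) (uτ : P.V)
    (h₁ : P.IsSol αst τ (s + T - τ) uτ u₁)
    (h₂ : P.IsSol αst τ (s + T - τ) uτ u₂)
    (ατ : ℝ) (hατ : ατ ∈ Set.Ioo P.aLow αst)
    (hτT : s + T ≤ τ + P.Tt ατ αst)
    (huτ : uτ ∈ P.B ατ) :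
    ∀ t ∈ Set.Ioo τ (s + T), u₁ t = u₂ t := by
  obtain ⟨β, hb1, hb2⟩ := EReal.exists_between_coe_real (P.idx_high hαst)
  have hαβ : αst < β := by exact_mod_cast hb1
  have hβidx : β ∈ P.idx := P.mem_idx (lt_trans (P.idx_low hαst) hαβ) hb2
  obtain ⟨h1B, h1c, h1AZ, h1d, h1τ⟩ := h₁
  obtain ⟨h2B, h2c, h2AZ, h2d, h2τ⟩ := h₂
  have hsum : τ + (s + T - τ) = s + T := by ring
  rw [hsum] at h1B h1c h1AZ h1d h2B h2c h2AZ h2d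
  set w : ℝ → P.V := fun r => u₁ r - u₂ r with hwdef
  have hτT : τ < s + T := hτ.2
  have hwB : ∀ r ∈ Set.Ico τ (s+T), w r ∈ P.B αst := fun r hr =>
    Submodule.sub_mem _ (h1B r hr) (h2B r hr)
  have hwc : SContinuousOn (P.nrm αst) w (Set.Ico τ (s+T)) := by
    intro t₀ ht₀ ε hε
    obtain ⟨δ1, hδ1, hc1⟩ := h1c t₀ ht₀ (ε/2) (by linarith)
    obtain ⟨δ2, hδ2, hc2⟩ := h2c t₀ ht₀ (ε/2) (by linarith)
    refine ⟨min δ1 δ2, lt_min hδ1 hδ2, ?_⟩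
    intro r hr hne hrd
    have e1 := hc1 r hr hne (lt_of_lt_of_le hrd (min_le_left _ _))
    have e2 := hc2 r hr hne (lt_of_lt_of_le hrd (min_le_right _ _))
    have hsplit : w r - w t₀ = (u₁ r - u₁ t₀) - (u₂ r - u₂ t₀) := by
      simp only [hwdef]; abel
    rw [hsplit]
    have hm1 : u₁ r - u₁ t₀ ∈ P.B αst := Submodule.sub_mem _ (h1B r hr) (h1B t₀ ht₀)
    have hm2 : u₂ r - u₂ t₀ ∈ P.B αst := Submodule.sub_mem _ (h2B r hr) (h2B t₀ ht₀)
    calc P.nrm αst ((u₁ r - u₁ t₀) - (u₂ r - u₂ t₀))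
        ≤ P.nrm αst (u₁ r - u₁ t₀) + P.nrm αst (u₂ r - u₂ t₀) :=
          P.nrm_sub_le' hαst hm1 hm2
    _ < ε := by linarith
  have hAZw : ∀ r ∈ Set.Ioo τ (s+T), P.A (w r) ∈ P.B αst ∧ P.Z (w r) ∈ P.B αst := by
    intro r hr
    have a1 := h1AZ r hr
    have a2 := h2AZ r hr
    constructor
    · have hA : P.A (w r) = P.A (u₁ r) - P.A (u₂ r) := by
        simp only [hwdef]; exact map_sub _ _ _
      rw [hA]; exact Submodule.sub_mem _ a1.1 a2.1
    · have hZ : P.Z (w r) = P.Z (u₁ r) - P.Z (u₂ r) := by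
        simp only [hwdef]; exact map_sub _ _ _
      rw [hZ]; exact Submodule.sub_mem _ a1.2 a2.2
  have hdw : ∀ r ∈ Set.Ioo τ (s+T),
      SHasDerivWithin (P.nrm αst) w (Set.Ico τ (s+T)) r (P.A (w r) + P.Z (w r)) := by
    intro r hr ε hε
    obtain ⟨δ1, hδ1, hc1⟩ := h1d r hr (ε/2) (by linarith)
    obtain ⟨δ2, hδ2, hc2⟩ := h2d r hr (ε/2) (by linarith)
    refine ⟨min δ1 δ2, lt_min hδ1 hδ2, ?_⟩
    intro x hx hne hxd
    have e1 := hc1 x hx hne (lt_of_lt_of_le hxd (min_le_left _ _))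
    have e2 := hc2 x hx hne (lt_of_lt_of_le hxd (min_le_right _ _))
    have hrIco : r ∈ Set.Ico τ (s+T) := ⟨hr.1.le, hr.2⟩
    have hsplit : (x - r)⁻¹ • (w x - w r) - (P.A (w r) + P.Z (w r)) =
        ((x - r)⁻¹ • (u₁ x - u₁ r) - (P.A (u₁ r) + P.Z (u₁ r))) -
        ((x - r)⁻¹ • (u₂ x - u₂ r) - (P.A (u₂ r) + P.Z (u₂ r))) := by
      simp only [hwdef, map_sub, smul_sub]
      abel
    rw [hsplit]
    have a1 := h1AZ r hr
    have a2 := h2AZ r hr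
    have hm1 : (x - r)⁻¹ • (u₁ x - u₁ r) - (P.A (u₁ r) + P.Z (u₁ r)) ∈ P.B αst :=
      Submodule.sub_mem _
        (Submodule.smul_mem _ _ (Submodule.sub_mem _ (h1B x hx) (h1B r hrIco)))
        (Submodule.add_mem _ a1.1 a1.2)
    have hm2 : (x - r)⁻¹ • (u₂ x - u₂ r) - (P.A (u₂ r) + P.Z (u₂ r)) ∈ P.B αst :=
      Submodule.sub_mem _
        (Submodule.smul_mem _ _ (Submodule.sub_mem _ (h2B x hx) (h2B r hrIco)))
        (Submodule.add_mem _ a2.1 a2.2)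
    calc P.nrm αst (((x - r)⁻¹ • (u₁ x - u₁ r) - (P.A (u₁ r) + P.Z (u₁ r))) -
          ((x - r)⁻¹ • (u₂ x - u₂ r) - (P.A (u₂ r) + P.Z (u₂ r))))
        ≤ P.nrm αst ((x - r)⁻¹ • (u₁ x - u₁ r) - (P.A (u₁ r) + P.Z (u₁ r))) +
          P.nrm αst ((x - r)⁻¹ • (u₂ x - u₂ r) - (P.A (u₂ r) + P.Z (u₂ r))) :=
          P.nrm_sub_le' hαst hm1 hm2
    _ < ε := by linarith
  have hw0 : w τ = 0 := by
    simp only [hwdef]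
    rw [h1τ, h2τ, sub_self]
  have hvan := P.vanish αst β hαst hβidx hαβ τ (s+T) hτT w hwB hwc hAZw hdw hw0
  intro t ht
  have hz := hvan t ⟨ht.1.le, ht.2⟩
  have h2 : u₁ t - u₂ t = 0 := by simpa [hwdef] using hz
  exact sub_eq_zero.mp h2
end
end

section
/- Under Assumptions 1–3, let α*, α** ∈ I with α* < α**, s ≥ 0, α_s ∈ (α̲, α*), u_s ∈ B_{α_s}. Set T := T(α_s, α*), T̃ := T(α_s, α**), and T₀ := min{T, T̃}. Let u : [s, s+T) → B_{α*} be the solution of d/dt u = Au + Zu with u(s) = u_s in B_{α*}, and let ũ : [s, s+T̃) → B_{α**} be the solution of the same equation with the same initial value in the larger space B_{α**}. Then for every t ∈ [s, s+T₀) one has ũ(t) = u(t) ∈ B_{α*}. -/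
noncomputable section

open Set

namespace OvsHelp
open OvsSystem Set

variable (P : OvsSystem)

lemma mem_idx_of_between {p γ : ℝ} (hγ : γ ∈ P.idx) (h1 : P.aLow < p) (h2 : p ≤ γ) :
    p ∈ P.idx := by
  rw [P.idx_def] at hγ ⊢
  exact ⟨h1, lt_of_le_of_lt (EReal.coe_le_coe_iff.mpr h2) hγ.2⟩

lemma aLow_lt {α : ℝ} (hα : α ∈ P.idx) : P.aLow < α := by
  rw [P.idx_def] at hα; exact hα.1

lemma nrm_neg {α : ℝ} (hα : α ∈ P.idx) {x : P.V} (hx : x ∈ P.B α) :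
    P.nrm α (-x) = P.nrm α x := by
  have h := P.nrm_smul α hα (-1) x hx
  simpa using h

lemma nrm_sub_le {α : ℝ} (hα : α ∈ P.idx) {x y : P.V} (hx : x ∈ P.B α) (hy : y ∈ P.B α) :
    P.nrm α (x - y) ≤ P.nrm α x + P.nrm α y := by
  have h := P.nrm_add α hα x hx (-y) (neg_mem hy)
  rw [← sub_eq_add_neg] at h
  rw [nrm_neg P hα hy] at h
  exact h

lemma nrm_tri {α : ℝ} (hα : α ∈ P.idx) {x y z : P.V} (hx : x ∈ P.B α) (hy : y ∈ P.B α)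
    (hz : z ∈ P.B α) : P.nrm α (x - z) ≤ P.nrm α (x - y) + P.nrm α (y - z) := by
  have h := P.nrm_add α hα (x - y) (sub_mem hx hy) (y - z) (sub_mem hy hz)
  simpa using h

lemma abs_nrm_sub_le {α : ℝ} (hα : α ∈ P.idx) {x y : P.V} (hx : x ∈ P.B α) (hy : y ∈ P.B α) :
    |P.nrm α x - P.nrm α y| ≤ P.nrm α (x - y) := by
  rw [abs_sub_le_iff]
  constructor
  · have h : P.nrm α x ≤ P.nrm α (x - y) + P.nrm α y := by
      have := P.nrm_add α hα (x - y) (sub_mem hx hy) y hy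
      simpa using this
    linarith
  · have h : P.nrm α y ≤ P.nrm α (y - x) + P.nrm α x := by
      have := P.nrm_add α hα (y - x) (sub_mem hy hx) x hx
      simpa using this
    have h2 : P.nrm α (y - x) = P.nrm α (x - y) := by
      rw [← nrm_neg P hα (sub_mem hx hy)]; rw [neg_sub]
    linarith

lemma S_zero {α : ℝ} (hα : α ∈ P.idx) {t : ℝ} (ht : 0 ≤ t) : P.S α t 0 = 0 := by
  have h := P.S_smul α hα t ht 0 (0 : P.V) (zero_mem _)
  simpa using h

lemma S_sub {α : ℝ} (hα : α ∈ P.idx) {t : ℝ} (ht : 0 ≤ t) {x y : P.V}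
    (hx : x ∈ P.C α) (hy : y ∈ P.C α) :
    P.S α t (x - y) = P.S α t x - P.S α t y := by
  have h1 := P.S_add α hα t ht x hx ((-1 : ℝ) • y) (Submodule.smul_mem _ _ hy)
  have h2 := P.S_smul α hα t ht (-1) y hy
  rw [h2] at h1
  rw [sub_eq_add_neg, sub_eq_add_neg, ← neg_one_smul ℝ y, ← neg_one_smul ℝ (P.S α t y)]
  exact h1

/-- uniform bound constant -/
def CBd (Q : OvsSystem) (r : ℝ) : ℝ := Q.nu * Real.exp (|Q.om| * r)

lemma CBd_pos (r : ℝ) : 0 < CBd P r :=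
  mul_pos (lt_of_lt_of_le one_pos P.one_le_nu) (Real.exp_pos _)

lemma S_nrm_le {α : ℝ} (hα : α ∈ P.idx) {t r : ℝ} (ht : 0 ≤ t) (htr : t ≤ r)
    {x : P.V} (hx : x ∈ P.C α) :
    P.nrm α (P.S α t x) ≤ CBd P r * P.nrm α x := by
  have h := P.S_bound α hα t ht x hx
  refine h.trans ?_
  have hx' : 0 ≤ P.nrm α x := P.nrm_nonneg α hα x (P.C_le_B α hα hx)
  have h2 : Real.exp (P.om * t) ≤ Real.exp (|P.om| * r) := by
    apply Real.exp_le_exp.mpr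
    calc P.om * t ≤ |P.om| * t := mul_le_mul_of_nonneg_right (le_abs_self _) ht
    _ ≤ |P.om| * r := mul_le_mul_of_nonneg_left htr (abs_nonneg _)
  unfold CBd
  have hnu : (0 : ℝ) ≤ P.nu := le_trans zero_le_one P.one_le_nu
  have := mul_le_mul_of_nonneg_left h2 hnu
  exact mul_le_mul_of_nonneg_right this hx'

end OvsHelp

namespace OvsHelp
open OvsSystem Set

lemma mvi (P : OvsSystem) {α : ℝ} (hα : α ∈ P.idx) {a b : ℝ} (hab : a ≤ b)
    (g : ℝ → P.V) (hgB : ∀ x ∈ Icc a b, g x ∈ P.B α)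
    (hgc : ∀ x₀ ∈ Icc a b, ∀ ε > 0, ∃ δ > 0, ∀ x ∈ Icc a b,
      |x - x₀| < δ → P.nrm α (g x - g x₀) < ε)
    (φ Φ : ℝ → ℝ) (hΦ : ∀ x ∈ Icc a b, HasDerivAt Φ (φ x) x)
    (hd : ∀ x ∈ Ioo a b, ∃ L ∈ P.B α, P.nrm α L ≤ φ x ∧
      ∀ ε > 0, ∃ δ > 0, ∀ y ∈ Icc a b, y ≠ x → |y - x| < δ →
        P.nrm α ((y - x)⁻¹ • (g y - g x) - L) < ε) :
    P.nrm α (g b - g a) ≤ Φ b - Φ a := by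
  rcases eq_or_lt_of_le hab with heq | hlt
  · subst heq
    simp [P.nrm_zero α hα]
  -- reduce to ε-version
  have key : ∀ ε > 0, P.nrm α (g b - g a) ≤ Φ b - Φ a + ε * (b - a) + ε := by
    intro ε hε
    set ψ : ℝ → ℝ := fun x => P.nrm α (g x - g a) - (Φ x - Φ a) - ε * (x - a) with hψdef
    -- continuity of ψ on Icc a b
    have hnc : ContinuousOn (fun x => P.nrm α (g x - g a)) (Icc a b) := by
      rw [Metric.continuousOn_iff]
      intro x₀ hx₀ ε' hε'
      obtain ⟨δ, hδ, hδ'⟩ := hgc x₀ hx₀ ε' hε'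
      refine ⟨δ, hδ, fun x hx hdist => ?_⟩
      rw [Real.dist_eq] at hdist ⊢
      have hm1 : g x - g a ∈ P.B α := sub_mem (hgB x hx) (hgB a ⟨le_refl a, hab⟩)
      have hm2 : g x₀ - g a ∈ P.B α := sub_mem (hgB x₀ hx₀) (hgB a ⟨le_refl a, hab⟩)
      have h1 : |P.nrm α (g x - g a) - P.nrm α (g x₀ - g a)| ≤
          P.nrm α ((g x - g a) - (g x₀ - g a)) := abs_nrm_sub_le P hα hm1 hm2
      have h2 : (g x - g a) - (g x₀ - g a) = g x - g x₀ := by abel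
      rw [h2] at h1
      exact lt_of_le_of_lt h1 (hδ' x hx hdist)
    have hΦc : ContinuousOn Φ (Icc a b) := fun x hx => (hΦ x hx).continuousAt.continuousWithinAt
    have hψc : ContinuousOn ψ (Icc a b) := by
      apply ContinuousOn.sub
      apply ContinuousOn.sub hnc
      · exact (hΦc.sub continuousOn_const)
      · exact (continuousOn_const.mul ((continuousOn_id.sub continuousOn_const)))
    set E : Set ℝ := Icc a b ∩ ψ ⁻¹' (Iic ε) with hEdef
    have haE : a ∈ E := by
      constructor
      · exact ⟨le_refl a, hab⟩
      · simp only [mem_preimage, mem_Iic, hψdef]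
        simp [P.nrm_zero α hα, le_of_lt hε]
    have hEne : E.Nonempty := ⟨a, haE⟩
    have hbdd : BddAbove E := ⟨b, fun x hx => hx.1.2⟩
    have hEclosed : IsClosed E := hψc.preimage_isClosed_of_isClosed isClosed_Icc isClosed_Iic
    set c := sSup E with hcdef
    have hcE : c ∈ E := hEclosed.csSup_mem hEne hbdd
    have hac : a ≤ c := le_csSup hbdd haE
    have hcb : c ≤ b := csSup_le hEne (fun x hx => hx.1.2)
    have hcIcc : c ∈ Icc a b := ⟨hac, hcb⟩
    have hψc_le : ψ c ≤ ε := hcE.2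
    -- claim c = b
    have hcbeq : c = b := by
      by_contra hne
      have hcb' : c < b := lt_of_le_of_ne hcb hne
      -- we derive a point x ∈ E with c < x, contradiction
      have hcontr : ∃ x ∈ E, c < x := by
        rcases eq_or_lt_of_le hac with hceqa | hac'
        · -- c = a : use continuity
          have hψa : ψ a = 0 := by
            simp [hψdef, P.nrm_zero α hα]
          have hcw : ContinuousWithinAt ψ (Icc a b) a :=
            hψc a ⟨le_refl a, hab⟩
          rw [Metric.continuousWithinAt_iff] at hcw
          obtain ⟨δ, hδ, hδ'⟩ := hcw ε hε
          refine ⟨min b (a + δ / 2), ?_, ?_⟩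
          · have hx1 : a ≤ min b (a + δ / 2) := le_min hab (by linarith)
            have hx2 : min b (a + δ / 2) ≤ b := min_le_left _ _
            refine ⟨⟨hx1, hx2⟩, ?_⟩
            simp only [mem_preimage, mem_Iic]
            have hdist : dist (min b (a + δ / 2)) a < δ := by
              rw [Real.dist_eq, abs_of_nonneg (by linarith)]
              have : min b (a + δ / 2) ≤ a + δ / 2 := min_le_right _ _
              linarith
            have := hδ' ⟨hx1, hx2⟩ hdist
            rw [Real.dist_eq, hψa] at this
            have h3 : ψ (min b (a + δ / 2)) ≤ |ψ (min b (a + δ / 2)) - 0| := by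
              rw [sub_zero]; exact le_abs_self _
            linarith
          · have hab2 : a < b := hceqa ▸ hcb'
            rw [← hceqa]
            exact lt_min hab2 (by linarith)
        · -- a < c < b : use the derivative at c
          obtain ⟨L, hLB, hLφ, hLd⟩ := hd c ⟨hac', hcb'⟩
          obtain ⟨δ₁, hδ₁, hq⟩ := hLd (ε / 2) (half_pos hε)
          have hslope : Filter.Tendsto (slope Φ c) (nhdsWithin c {c}ᶜ) (nhds (φ c)) :=
            hasDerivAt_iff_tendsto_slope.mp (hΦ c hcIcc)
          rw [Metric.tendsto_nhdsWithin_nhds] at hslope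
          obtain ⟨δ₂, hδ₂, hsl⟩ := hslope (ε / 2) (half_pos hε)
          set x := min b (c + min δ₁ δ₂ / 2) with hxdef
          have hδm : 0 < min δ₁ δ₂ := lt_min hδ₁ hδ₂
          have hcx : c < x := lt_min hcb' (by linarith)
          have hxb : x ≤ b := min_le_left _ _
          have hxIcc : x ∈ Icc a b := ⟨le_trans hac (le_of_lt hcx), hxb⟩
          have hxc2 : x - c ≤ min δ₁ δ₂ / 2 := by
            have : x ≤ c + min δ₁ δ₂ / 2 := min_le_right _ _
            linarith
          have hxcpos : 0 < x - c := by linarith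
          have hxcabs : |x - c| < min δ₁ δ₂ := by
            rw [abs_of_pos hxcpos]; linarith
          -- bound nrm (g x - g c)
          have hQB : (x - c)⁻¹ • (g x - g c) ∈ P.B α :=
            Submodule.smul_mem _ _ (sub_mem (hgB x hxIcc) (hgB c hcIcc))
          have hq' := hq x hxIcc (ne_of_gt hcx) (lt_of_lt_of_le hxcabs (min_le_left _ _))
          have hQn : P.nrm α ((x - c)⁻¹ • (g x - g c)) ≤ φ c + ε / 2 := by
            have h5 : P.nrm α ((x - c)⁻¹ • (g x - g c)) ≤
                P.nrm α ((x - c)⁻¹ • (g x - g c) - L) + P.nrm α L := by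
              have := P.nrm_add α hα ((x - c)⁻¹ • (g x - g c) - L) (sub_mem hQB hLB) L hLB
              simpa using this
            linarith
          have hgxc : P.nrm α (g x - g c) ≤ (x - c) * (φ c + ε / 2) := by
            have h6 : g x - g c = (x - c) • ((x - c)⁻¹ • (g x - g c)) := by
              rw [smul_inv_smul₀ (ne_of_gt hxcpos)]
            rw [h6, P.nrm_smul α hα _ _ hQB, abs_of_pos hxcpos]
            exact mul_le_mul_of_nonneg_left hQn (le_of_lt hxcpos)
          -- bound Φ x - Φ c from below
          have hΦlb : (x - c) * (φ c - ε / 2) ≤ Φ x - Φ c := by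
            have hxne : x ∈ ({c}ᶜ : Set ℝ) := by
              simp [ne_of_gt hcx]
            have hdist : dist x c < δ₂ := by
              rw [Real.dist_eq]
              exact lt_of_lt_of_le hxcabs (min_le_right _ _)
            have := hsl hxne hdist
            rw [Real.dist_eq] at this
            have hsleq : slope Φ c x = (Φ x - Φ c) / (x - c) := by
              rw [slope_def_field]
            rw [hsleq] at this
            have h7 : (Φ x - Φ c) / (x - c) ≥ φ c - ε / 2 := by
              cases' abs_lt.mp this with h7a h7b
              linarith
            calc (x - c) * (φ c - ε / 2) ≤ (x - c) * ((Φ x - Φ c) / (x - c)) :=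
                  mul_le_mul_of_nonneg_left h7 (le_of_lt hxcpos)
              _ = Φ x - Φ c := by field_simp
          -- conclude ψ x ≤ ψ c
          have htri : P.nrm α (g x - g a) ≤ P.nrm α (g x - g c) + P.nrm α (g c - g a) :=
            nrm_tri P hα (hgB x hxIcc) (hgB c hcIcc) (hgB a ⟨le_refl a, hab⟩)
          have hψx : ψ x ≤ ε := by
            have : ψ x ≤ ψ c := by
              simp only [hψdef]
              have e1 : P.nrm α (g x - g a) ≤
                  (x - c) * (φ c + ε / 2) + P.nrm α (g c - g a) := by linarith
              nlinarith [hΦlb]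
            linarith
          exact ⟨x, ⟨hxIcc, hψx⟩, hcx⟩
      obtain ⟨x, hxE, hcx⟩ := hcontr
      exact absurd (le_csSup hbdd hxE) (not_le.mpr hcx)
    -- b ∈ E
    have hbE : ψ b ≤ ε := by rw [← hcbeq]; exact hψc_le
    simp only [hψdef] at hbE
    linarith
  -- remove ε
  have h2 : ∀ ε' > 0, P.nrm α (g b - g a) ≤ (Φ b - Φ a) + ε' := by
    intro ε' hε'
    have hpos : 0 < b - a + 1 := by linarith
    have := key (ε' / (b - a + 1)) (div_pos hε' hpos)
    have hle : ε' / (b - a + 1) * (b - a) + ε' / (b - a + 1) ≤ ε' := by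
      rw [div_mul_eq_mul_div, ← add_div]
      rw [div_le_iff₀ hpos]
      ring_nf
      nlinarith
    linarith
  exact le_of_forall_pos_le_add h2

end OvsHelp

namespace OvsHelp
open OvsSystem Set

lemma one_step (P : OvsSystem) {β γ : ℝ} (hβ : β ∈ P.idx) (hγ : γ ∈ P.idx)
    {s tE : ℝ} (w : ℝ → P.V)
    (H1 : ∀ τ ∈ Icc s tE, w τ ∈ P.B β)
    (H2 : ∀ τ₀ ∈ Icc s tE, ∀ ε > 0, ∃ δ > 0, ∀ τ ∈ Icc s tE,
      |τ - τ₀| < δ → P.nrm β (w τ - w τ₀) < ε)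
    (H3 : ∀ τ ∈ Ioo s tE, P.A (w τ) ∈ P.B β ∧ P.Z (w τ) ∈ P.B β)
    (H4 : ∀ τ ∈ Ioo s tE, ∀ ε > 0, ∃ δ > 0, ∀ τ' ∈ Icc s tE, τ' ≠ τ → |τ' - τ| < δ →
      P.nrm β ((τ' - τ)⁻¹ • (w τ' - w τ) - (P.A (w τ) + P.Z (w τ))) < ε)
    {p q : ℝ} (hβp : β ≤ p) (hpq : p < q) (hqγ : q ≤ γ)
    {a t : ℝ} (hsa : s ≤ a) (hat : a ≤ t) (httE : t ≤ tE) (ha0 : w a = 0)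
    {c : ℝ} (hc : 0 ≤ c) (k : ℕ)
    (hb : ∀ σ ∈ Icc a t, P.nrm p (w σ) ≤ c * (σ - a) ^ k / (k.factorial : ℝ)) :
    P.nrm q (w t) ≤ (CBd P (tE - s) * (P.M γ / (q - p) + P.Nf γ)) * c *
      (t - a) ^ (k + 1) / ((k + 1).factorial : ℝ) := by
  have hβq : β < q := lt_of_le_of_lt hβp hpq
  have haLowp : P.aLow < p := lt_of_lt_of_le (aLow_lt P hβ) hβp
  have hq_idx : q ∈ P.idx := mem_idx_of_between P hγ (lt_trans haLowp hpq) hqγ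
  have hp_idx : p ∈ P.idx := mem_idx_of_between P hγ haLowp (le_trans (le_of_lt hpq) hqγ)
  have hCB0 : 0 < CBd P (tE - s) := CBd_pos P _
  have hMN : 0 < P.M γ / (q - p) + P.Nf γ :=
    add_pos (div_pos (P.M_pos γ hγ) (by linarith)) (P.N_pos γ hγ)
  have hBD : P.B β ≤ P.D q := P.B_le_D β hβ q hq_idx hβq
  have hBC : P.B β ≤ P.C q := le_trans hBD (P.D_le_C q hq_idx)
  have hsub : Icc a t ⊆ Icc s tE := Icc_subset_Icc hsa httE
  have memC : ∀ τ ∈ Icc a t, w τ ∈ P.C q := fun τ hτ => hBC (H1 τ (hsub hτ))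
  rcases eq_or_lt_of_le hat with heq | halt
  · subst heq
    rw [ha0, P.nrm_zero q hq_idx, sub_self, zero_pow (Nat.succ_ne_zero k)]
    simp
  set CBc := CBd P (tE - s) with hCBcdef
  set KZ := CBc * (P.M γ / (q - p) + P.Nf γ) with hKZdef
  have hKZ0 : 0 ≤ KZ := le_of_lt (mul_pos hCB0 hMN)
  set g : ℝ → P.V := fun τ => P.S q (t - τ) (w τ) with hgdef
  set φ : ℝ → ℝ := fun τ => KZ * c * (τ - a) ^ k / (k.factorial : ℝ) with hφdef
  set Φ : ℝ → ℝ := fun τ => KZ * c * (τ - a) ^ (k + 1) / ((k + 1).factorial : ℝ) with hΦdef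
  -- hypotheses for mvi
  have hgB : ∀ x ∈ Icc a t, g x ∈ P.B q := by
    intro x hx
    exact P.C_le_B q hq_idx (P.S_mem q hq_idx (t - x) (by linarith [hx.2]) (w x) (memC x hx))
  have hgc : ∀ x₀ ∈ Icc a t, ∀ ε > 0, ∃ δ > 0, ∀ x ∈ Icc a t,
      |x - x₀| < δ → P.nrm q (g x - g x₀) < ε := by
    intro x₀ hx₀ ε hε
    obtain ⟨δ₁, hδ₁p, hδ₁⟩ := H2 x₀ (hsub hx₀) (ε / (2 * CBc)) (by positivity)
    obtain ⟨δ₂, hδ₂p, hδ₂⟩ := P.S_cont q hq_idx (w x₀) (memC x₀ hx₀) (t - x₀)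
      (by linarith [hx₀.2]) (ε / 2) (half_pos hε)
    refine ⟨min δ₁ δ₂, lt_min hδ₁p hδ₂p, fun x hx hxd => ?_⟩
    have htx : (0:ℝ) ≤ t - x := by linarith [hx.2]
    have hid : g x - g x₀ = (P.S q (t - x) (w x - w x₀)) +
        (P.S q (t - x) (w x₀) - P.S q (t - x₀) (w x₀)) := by
      rw [S_sub P hq_idx htx (memC x hx) (memC x₀ hx₀)]
      simp only [hgdef]
      abel
    have hm1 : P.S q (t - x) (w x - w x₀) ∈ P.B q :=
      P.C_le_B q hq_idx (P.S_mem q hq_idx _ htx _ (sub_mem (memC x hx) (memC x₀ hx₀)))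
    have hm2 : P.S q (t - x) (w x₀) - P.S q (t - x₀) (w x₀) ∈ P.B q :=
      sub_mem (P.C_le_B q hq_idx (P.S_mem q hq_idx _ htx _ (memC x₀ hx₀)))
        (P.C_le_B q hq_idx (P.S_mem q hq_idx _ (by linarith [hx₀.2]) _ (memC x₀ hx₀)))
    rw [hid]
    refine lt_of_le_of_lt (P.nrm_add q hq_idx _ hm1 _ hm2) ?_
    have hb1 : P.nrm q (P.S q (t - x) (w x - w x₀)) < ε / 2 := by
      have e1 : P.nrm q (P.S q (t - x) (w x - w x₀)) ≤ CBc * P.nrm q (w x - w x₀) :=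
        S_nrm_le P hq_idx htx (by linarith [hx.1]) (sub_mem (memC x hx) (memC x₀ hx₀))
      have e2 : P.nrm q (w x - w x₀) ≤ P.nrm β (w x - w x₀) :=
        P.nrm_mono β hβ q hq_idx (le_of_lt hβq) _ (sub_mem (H1 x (hsub hx)) (H1 x₀ (hsub hx₀)))
      have e3 : P.nrm β (w x - w x₀) < ε / (2 * CBc) :=
        hδ₁ x (hsub hx) (lt_of_lt_of_le hxd (min_le_left _ _))
      have e4 : CBc * (ε / (2 * CBc)) = ε / 2 := by
        field_simp
      calc P.nrm q (P.S q (t - x) (w x - w x₀)) ≤ CBc * P.nrm β (w x - w x₀) := by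
            refine e1.trans (mul_le_mul_of_nonneg_left e2 (le_of_lt hCB0))
        _ < CBc * (ε / (2 * CBc)) := by
            exact mul_lt_mul_of_pos_left e3 hCB0
        _ = ε / 2 := e4
    have hb2 : P.nrm q (P.S q (t - x) (w x₀) - P.S q (t - x₀) (w x₀)) < ε / 2 := by
      apply hδ₂ (t - x) htx
      have : t - x - (t - x₀) = x₀ - x := by ring
      rw [this, abs_sub_comm]
      exact lt_of_lt_of_le hxd (min_le_right _ _)
    linarith
  have hΦd : ∀ x ∈ Icc a t, HasDerivAt Φ (φ x) x := by
    intro x _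
    have h1 : HasDerivAt (fun τ : ℝ => (τ - a) ^ (k + 1))
        (((k + 1 : ℕ) : ℝ) * (x - a) ^ (k + 1 - 1) * 1) x :=
      ((hasDerivAt_id x).sub_const a).pow (k + 1)
    have h2 := (h1.const_mul (KZ * c)).div_const (((k + 1).factorial : ℝ))
    have hval : KZ * c * (((k + 1 : ℕ) : ℝ) * (x - a) ^ (k + 1 - 1) * 1) /
        (((k + 1).factorial : ℝ)) = φ x := by
      have hfact : (((k + 1).factorial : ℕ) : ℝ) = ((k + 1 : ℕ) : ℝ) * (k.factorial : ℝ) := by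
        exact_mod_cast Nat.factorial_succ k
      simp only [hφdef, Nat.add_sub_cancel, mul_one]
      rw [hfact]
      have hk1 : ((k + 1 : ℕ) : ℝ) ≠ 0 := by positivity
      have hkf : (k.factorial : ℝ) ≠ 0 := by positivity
      field_simp
    rw [hval] at h2
    simpa only [hΦdef] using h2
  have hd : ∀ τ ∈ Ioo a t, ∃ L ∈ P.B q, P.nrm q L ≤ φ τ ∧
      ∀ ε > 0, ∃ δ > 0, ∀ y ∈ Icc a t, y ≠ τ → |y - τ| < δ →
        P.nrm q ((y - τ)⁻¹ • (g y - g τ) - L) < ε := by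
    intro τ hτ
    have hτs : τ ∈ Ioo s tE := ⟨lt_of_le_of_lt hsa hτ.1, lt_of_lt_of_le hτ.2 httE⟩
    have hτIcc : τ ∈ Icc a t := ⟨le_of_lt hτ.1, le_of_lt hτ.2⟩
    have hvB : w τ ∈ P.B β := H1 τ (hsub hτIcc)
    have hvC : w τ ∈ P.C q := hBC hvB
    have hvD : w τ ∈ P.D q := hBD hvB
    obtain ⟨hAv, hZv⟩ := H3 τ hτs
    have hAvC : P.A (w τ) ∈ P.C q := hBC hAv
    have hZvC : P.Z (w τ) ∈ P.C q := hBC hZv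
    have hDvB : P.A (w τ) + P.Z (w τ) ∈ P.B β := add_mem hAv hZv
    have hDvC : P.A (w τ) + P.Z (w τ) ∈ P.C q := hBC hDvB
    have hρpos : (0:ℝ) < t - τ := by linarith [hτ.2]
    have hρle : t - τ ≤ tE - s := by linarith [hτ.1]
    refine ⟨P.S q (t - τ) (P.Z (w τ)), ?_, ?_, ?_⟩
    · exact P.C_le_B q hq_idx (P.S_mem q hq_idx _ (le_of_lt hρpos) _ hZvC)
    · have hvp : w τ ∈ P.B p := P.B_mono β hβ p hp_idx hβp hvB
      have e1 : P.nrm q (P.S q (t - τ) (P.Z (w τ))) ≤ CBc * P.nrm q (P.Z (w τ)) :=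
        S_nrm_le P hq_idx (le_of_lt hρpos) hρle hZvC
      have e2 : P.nrm q (P.Z (w τ)) ≤ (P.M γ / (q - p) + P.Nf γ) * P.nrm p (w τ) :=
        P.Z_bound γ hγ p q haLowp hpq hqγ (w τ) hvp
      have e3 : P.nrm p (w τ) ≤ c * (τ - a) ^ k / (k.factorial : ℝ) := hb τ hτIcc
      calc P.nrm q (P.S q (t - τ) (P.Z (w τ))) ≤ CBc * ((P.M γ / (q - p) + P.Nf γ) *
            P.nrm p (w τ)) := e1.trans (mul_le_mul_of_nonneg_left e2 (le_of_lt hCB0))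
        _ ≤ CBc * ((P.M γ / (q - p) + P.Nf γ) * (c * (τ - a) ^ k / (k.factorial : ℝ))) := by
            refine mul_le_mul_of_nonneg_left ?_ (le_of_lt hCB0)
            exact mul_le_mul_of_nonneg_left e3 (le_of_lt hMN)
        _ = φ τ := by simp only [hφdef, hKZdef]; ring
    · intro ε hε
      obtain ⟨δ₁, hδ₁p, hδ₁⟩ := H4 τ hτs (ε / (3 * CBc)) (by positivity)
      obtain ⟨δ₂, hδ₂p, hδ₂⟩ := P.S_cont q hq_idx (P.A (w τ) + P.Z (w τ)) hDvC (t - τ)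
        (le_of_lt hρpos) (ε / 3) (by positivity)
      obtain ⟨δ₃a, hδ₃ap, hδ₃a⟩ := P.S_gen q hq_idx (w τ) hvD (ε / (6 * CBc)) (by positivity)
      obtain ⟨δ₃b, hδ₃bp, hδ₃b⟩ := P.S_cont q hq_idx (P.A (w τ)) hAvC (t - τ)
        (le_of_lt hρpos) (ε / 6) (by positivity)
      refine ⟨min δ₁ (min δ₂ (min δ₃a δ₃b)), by positivity, fun y hy hyne hyd => ?_⟩
      have hyIccSE : y ∈ Icc s tE := hsub hy
      have hwyB : w y ∈ P.B β := H1 y hyIccSE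
      have hwyC : w y ∈ P.C q := hBC hwyB
      have hty : (0:ℝ) ≤ t - y := by linarith [hy.2]
      have htyle : t - y ≤ tE - s := by linarith [hy.1]
      have hh0 : y - τ ≠ 0 := sub_ne_zero.mpr hyne
      have hd1 : |y - τ| < δ₁ := lt_of_lt_of_le hyd (min_le_left _ _)
      have hd2 : |y - τ| < δ₂ := lt_of_lt_of_le hyd (le_trans (min_le_right _ _) (min_le_left _ _))
      have hd3a : |y - τ| < δ₃a := lt_of_lt_of_le hyd
        (le_trans (min_le_right _ _) (le_trans (min_le_right _ _) (min_le_left _ _)))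
      have hd3b : |y - τ| < δ₃b := lt_of_lt_of_le hyd
        (le_trans (min_le_right _ _) (le_trans (min_le_right _ _) (min_le_right _ _)))
      set Qw := (y - τ)⁻¹ • (w y - w τ) with hQwdef
      set Dv := P.A (w τ) + P.Z (w τ) with hDvdef
      have hQwB : Qw ∈ P.B β := Submodule.smul_mem _ _ (sub_mem hwyB hvB)
      have hQwC : Qw ∈ P.C q := hBC hQwB
      -- T1 bound
      have hT1m : P.S q (t - y) (Qw - Dv) ∈ P.B q :=
        P.C_le_B q hq_idx (P.S_mem q hq_idx _ hty _ (sub_mem hQwC hDvC))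
      have hT1 : P.nrm q (P.S q (t - y) (Qw - Dv)) < ε / 3 := by
        have e1 : P.nrm q (P.S q (t - y) (Qw - Dv)) ≤ CBc * P.nrm q (Qw - Dv) :=
          S_nrm_le P hq_idx hty htyle (sub_mem hQwC hDvC)
        have e2 : P.nrm q (Qw - Dv) ≤ P.nrm β (Qw - Dv) :=
          P.nrm_mono β hβ q hq_idx (le_of_lt hβq) _ (sub_mem hQwB hDvB)
        have e3 : P.nrm β (Qw - Dv) < ε / (3 * CBc) := hδ₁ y hyIccSE hyne hd1
        have e4 : CBc * (ε / (3 * CBc)) = ε / 3 := by field_simp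
        calc P.nrm q (P.S q (t - y) (Qw - Dv)) ≤ CBc * P.nrm β (Qw - Dv) :=
              e1.trans (mul_le_mul_of_nonneg_left e2 (le_of_lt hCB0))
          _ < CBc * (ε / (3 * CBc)) := mul_lt_mul_of_pos_left e3 hCB0
          _ = ε / 3 := e4
      -- T2 bound
      have hT2m : P.S q (t - y) Dv - P.S q (t - τ) Dv ∈ P.B q :=
        sub_mem (P.C_le_B q hq_idx (P.S_mem q hq_idx _ hty _ hDvC))
          (P.C_le_B q hq_idx (P.S_mem q hq_idx _ (le_of_lt hρpos) _ hDvC))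
      have hT2 : P.nrm q (P.S q (t - y) Dv - P.S q (t - τ) Dv) < ε / 3 := by
        apply hδ₂ (t - y) hty
        have : t - y - (t - τ) = -(y - τ) := by ring
        rw [this, abs_neg]
        exact hd2
      -- T3 bound
      have hT3m : (y - τ)⁻¹ • (P.S q (t - y) (w τ) - P.S q (t - τ) (w τ)) +
          P.S q (t - τ) (P.A (w τ)) ∈ P.B q := by
        refine add_mem (Submodule.smul_mem _ _ (sub_mem ?_ ?_)) ?_ <;>
          exact P.C_le_B q hq_idx (P.S_mem q hq_idx _ (by linarith) _ (by assumption))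
      have hT3 : P.nrm q ((y - τ)⁻¹ • (P.S q (t - y) (w τ) - P.S q (t - τ) (w τ)) +
          P.S q (t - τ) (P.A (w τ))) < ε / 3 := by
        rcases lt_or_gt_of_ne hh0 with hhneg | hhpos
        · -- y < τ : m = τ - y > 0
          set m := τ - y with hmdef
          have hm0 : 0 < m := by simp only [hmdef]; linarith
          have hmδ : m < δ₃a := by
            have : |y - τ| = m := by rw [abs_of_neg (by linarith : y - τ < 0)]; ring
            rw [this] at hd3a; exact hd3a
          have hSmC : P.S q m (w τ) ∈ P.C q := P.S_mem q hq_idx m (le_of_lt hm0) _ hvC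
          have e1 : P.S q (t - y) (w τ) = P.S q (t - τ) (P.S q m (w τ)) := by
            rw [P.S_semigroup q hq_idx (t - τ) (le_of_lt hρpos) m (le_of_lt hm0) _ hvC]
            congr 1
            simp only [hmdef]; ring
          have e2 : P.S q (t - y) (w τ) - P.S q (t - τ) (w τ) =
              P.S q (t - τ) (P.S q m (w τ) - w τ) := by
            rw [e1, S_sub P hq_idx (le_of_lt hρpos) hSmC hvC]
          have e3 : (y - τ)⁻¹ • (P.S q (t - y) (w τ) - P.S q (t - τ) (w τ)) =
              - P.S q (t - τ) (m⁻¹ • (P.S q m (w τ) - w τ)) := by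
            rw [e2, P.S_smul q hq_idx (t - τ) (le_of_lt hρpos) m⁻¹ _ (sub_mem hSmC hvC)]
            have : (y - τ)⁻¹ = -m⁻¹ := by
              simp only [hmdef]
              rw [← inv_neg]
              congr 1
              ring
            rw [this, neg_smul]
          have e4 : (y - τ)⁻¹ • (P.S q (t - y) (w τ) - P.S q (t - τ) (w τ)) +
              P.S q (t - τ) (P.A (w τ)) =
              P.S q (t - τ) (P.A (w τ) - m⁻¹ • (P.S q m (w τ) - w τ)) := by
            rw [e3, S_sub P hq_idx (le_of_lt hρpos) hAvC
              (Submodule.smul_mem _ _ (sub_mem hSmC hvC))]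
            abel
          rw [e4]
          have e5 : P.nrm q (P.S q (t - τ) (P.A (w τ) - m⁻¹ • (P.S q m (w τ) - w τ))) ≤
              CBc * P.nrm q (P.A (w τ) - m⁻¹ • (P.S q m (w τ) - w τ)) :=
            S_nrm_le P hq_idx (le_of_lt hρpos) hρle
              (sub_mem hAvC (Submodule.smul_mem _ _ (sub_mem hSmC hvC)))
          have e6 : P.nrm q (P.A (w τ) - m⁻¹ • (P.S q m (w τ) - w τ)) =
              P.nrm q (m⁻¹ • (P.S q m (w τ) - w τ) - P.A (w τ)) := by
            rw [← nrm_neg P hq_idx (sub_mem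
              (P.C_le_B q hq_idx (Submodule.smul_mem _ _ (sub_mem hSmC hvC)))
              (P.C_le_B q hq_idx hAvC))]
            congr 1
            abel
          have e7 := hδ₃a m hm0 hmδ
          rw [e6] at e5
          have e8 : CBc * (ε / (6 * CBc)) = ε / 6 := by field_simp
          calc P.nrm q (P.S q (t - τ) (P.A (w τ) - m⁻¹ • (P.S q m (w τ) - w τ))) ≤
                CBc * P.nrm q (m⁻¹ • (P.S q m (w τ) - w τ) - P.A (w τ)) := e5
            _ < CBc * (ε / (6 * CBc)) := mul_lt_mul_of_pos_left e7 hCB0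
            _ = ε / 6 := e8
            _ < ε / 3 := by linarith
        · -- y > τ : h = y - τ > 0
          set m := y - τ with hmdef
          have hm0 : 0 < m := by simp only [hmdef]; linarith
          have hmδa : m < δ₃a := by
            have : |y - τ| = m := abs_of_pos hm0
            rw [this] at hd3a; exact hd3a
          have hmδb : m < δ₃b := by
            have : |y - τ| = m := abs_of_pos hm0
            rw [this] at hd3b; exact hd3b
          have hSmC : P.S q m (w τ) ∈ P.C q := P.S_mem q hq_idx m (le_of_lt hm0) _ hvC
          have e1 : P.S q (t - τ) (w τ) = P.S q (t - y) (P.S q m (w τ)) := by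
            rw [P.S_semigroup q hq_idx (t - y) hty m (le_of_lt hm0) _ hvC]
            congr 1
            simp only [hmdef]; ring
          have e2 : P.S q (t - y) (w τ) - P.S q (t - τ) (w τ) =
              - P.S q (t - y) (P.S q m (w τ) - w τ) := by
            rw [e1, S_sub P hq_idx hty hSmC hvC]
            abel
          have e3 : (y - τ)⁻¹ • (P.S q (t - y) (w τ) - P.S q (t - τ) (w τ)) =
              - P.S q (t - y) (m⁻¹ • (P.S q m (w τ) - w τ)) := by
            rw [e2, P.S_smul q hq_idx (t - y) hty m⁻¹ _ (sub_mem hSmC hvC)]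
            rw [smul_neg]
          have e4 : (y - τ)⁻¹ • (P.S q (t - y) (w τ) - P.S q (t - τ) (w τ)) +
              P.S q (t - τ) (P.A (w τ)) =
              (P.S q (t - τ) (P.A (w τ)) - P.S q (t - y) (P.A (w τ))) +
              P.S q (t - y) (P.A (w τ) - m⁻¹ • (P.S q m (w τ) - w τ)) := by
            rw [e3, S_sub P hq_idx hty hAvC (Submodule.smul_mem _ _ (sub_mem hSmC hvC))]
            abel
          rw [e4]
          have hm1 : P.S q (t - τ) (P.A (w τ)) - P.S q (t - y) (P.A (w τ)) ∈ P.B q :=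
            sub_mem (P.C_le_B q hq_idx (P.S_mem q hq_idx _ (le_of_lt hρpos) _ hAvC))
              (P.C_le_B q hq_idx (P.S_mem q hq_idx _ hty _ hAvC))
          have hm2 : P.S q (t - y) (P.A (w τ) - m⁻¹ • (P.S q m (w τ) - w τ)) ∈ P.B q :=
            P.C_le_B q hq_idx (P.S_mem q hq_idx _ hty _
              (sub_mem hAvC (Submodule.smul_mem _ _ (sub_mem hSmC hvC))))
          refine lt_of_le_of_lt (P.nrm_add q hq_idx _ hm1 _ hm2) ?_
          have f1 : P.nrm q (P.S q (t - τ) (P.A (w τ)) - P.S q (t - y) (P.A (w τ))) < ε / 6 := by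
            have := hδ₃b (t - y) hty (by
              have : t - y - (t - τ) = -(y - τ) := by ring
              rw [this, abs_neg]; exact hd3b)
            have hsw : P.nrm q (P.S q (t - τ) (P.A (w τ)) - P.S q (t - y) (P.A (w τ))) =
                P.nrm q (P.S q (t - y) (P.A (w τ)) - P.S q (t - τ) (P.A (w τ))) := by
              rw [← nrm_neg P hq_idx (sub_mem
                (P.C_le_B q hq_idx (P.S_mem q hq_idx _ hty _ hAvC))
                (P.C_le_B q hq_idx (P.S_mem q hq_idx _ (le_of_lt hρpos) _ hAvC)))]
              congr 1
              abel
            rw [hsw]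
            exact this
          have f2 : P.nrm q (P.S q (t - y) (P.A (w τ) - m⁻¹ • (P.S q m (w τ) - w τ))) < ε / 6 := by
            have e5 : P.nrm q (P.S q (t - y) (P.A (w τ) - m⁻¹ • (P.S q m (w τ) - w τ))) ≤
                CBc * P.nrm q (P.A (w τ) - m⁻¹ • (P.S q m (w τ) - w τ)) :=
              S_nrm_le P hq_idx hty htyle
                (sub_mem hAvC (Submodule.smul_mem _ _ (sub_mem hSmC hvC)))
            have e6 : P.nrm q (P.A (w τ) - m⁻¹ • (P.S q m (w τ) - w τ)) =
                P.nrm q (m⁻¹ • (P.S q m (w τ) - w τ) - P.A (w τ)) := by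
              rw [← nrm_neg P hq_idx (sub_mem
                (P.C_le_B q hq_idx (Submodule.smul_mem _ _ (sub_mem hSmC hvC)))
                (P.C_le_B q hq_idx hAvC))]
              congr 1
              abel
            have e7 := hδ₃a m hm0 hmδa
            rw [e6] at e5
            have e8 : CBc * (ε / (6 * CBc)) = ε / 6 := by field_simp
            calc P.nrm q (P.S q (t - y) (P.A (w τ) - m⁻¹ • (P.S q m (w τ) - w τ))) ≤
                  CBc * P.nrm q (m⁻¹ • (P.S q m (w τ) - w τ) - P.A (w τ)) := e5
              _ < CBc * (ε / (6 * CBc)) := mul_lt_mul_of_pos_left e7 hCB0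
              _ = ε / 6 := e8
          linarith
      -- master identity
      have hidL : P.S q (t - τ) (P.Z (w τ)) = P.S q (t - τ) Dv - P.S q (t - τ) (P.A (w τ)) := by
        rw [← S_sub P hq_idx (le_of_lt hρpos) hDvC hAvC]
        congr 1
        simp only [hDvdef]
        abel
      have hidg : (y - τ)⁻¹ • (g y - g τ) = P.S q (t - y) Qw +
          (y - τ)⁻¹ • (P.S q (t - y) (w τ) - P.S q (t - τ) (w τ)) := by
        have e1 : g y - g τ = P.S q (t - y) (w y - w τ) +
            (P.S q (t - y) (w τ) - P.S q (t - τ) (w τ)) := by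
          rw [S_sub P hq_idx hty hwyC hvC]
          simp only [hgdef]
          abel
        rw [e1, smul_add]
        congr 1
        rw [P.S_smul q hq_idx (t - y) hty ((y - τ)⁻¹) _ (sub_mem hwyC hvC)]
      have hmaster : (y - τ)⁻¹ • (g y - g τ) - P.S q (t - τ) (P.Z (w τ)) =
          P.S q (t - y) (Qw - Dv) +
          ((P.S q (t - y) Dv - P.S q (t - τ) Dv) +
           ((y - τ)⁻¹ • (P.S q (t - y) (w τ) - P.S q (t - τ) (w τ)) +
            P.S q (t - τ) (P.A (w τ)))) := by
        rw [hidg, hidL, S_sub P hq_idx hty hQwC hDvC]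
        abel
      rw [hmaster]
      have hsum1 : (P.S q (t - y) Dv - P.S q (t - τ) Dv) +
          ((y - τ)⁻¹ • (P.S q (t - y) (w τ) - P.S q (t - τ) (w τ)) +
           P.S q (t - τ) (P.A (w τ))) ∈ P.B q := add_mem hT2m hT3m
      refine lt_of_le_of_lt (P.nrm_add q hq_idx _ hT1m _ hsum1) ?_
      have h2 := P.nrm_add q hq_idx _ hT2m _ hT3m
      linarith
  -- apply mvi
  have hmvi := mvi P hq_idx (le_of_lt halt) g hgB hgc φ Φ hΦd hd
  have hga : g a = 0 := by
    simp only [hgdef]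
    rw [ha0]
    exact S_zero P hq_idx (by linarith)
  have hgt : g t = w t := by
    simp only [hgdef, sub_self]
    exact P.S_id q hq_idx (w t) (memC t ⟨hat, le_refl t⟩)
  rw [hga, hgt, sub_zero] at hmvi
  have hΦa : Φ a = 0 := by
    simp only [hΦdef, sub_self, zero_pow (Nat.succ_ne_zero k)]
    simp
  rw [hΦa, sub_zero] at hmvi
  simp only [hΦdef, hKZdef, hCBcdef] at hmvi ⊢
  linarith

end OvsHelp

namespace OvsHelp
open OvsSystem Set

set_option maxHeartbeats 1000000 in
lemma local_zero (P : OvsSystem) {β γ : ℝ} (hβ : β ∈ P.idx) (hγ : γ ∈ P.idx) (hβγ : β < γ)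
    {s tE : ℝ} (hstE : s ≤ tE) (w : ℝ → P.V)
    (H1 : ∀ τ ∈ Icc s tE, w τ ∈ P.B β)
    (H2 : ∀ τ₀ ∈ Icc s tE, ∀ ε > 0, ∃ δ > 0, ∀ τ ∈ Icc s tE,
      |τ - τ₀| < δ → P.nrm β (w τ - w τ₀) < ε)
    (H3 : ∀ τ ∈ Ioo s tE, P.A (w τ) ∈ P.B β ∧ P.Z (w τ) ∈ P.B β)
    (H4 : ∀ τ ∈ Ioo s tE, ∀ ε > 0, ∃ δ > 0, ∀ τ' ∈ Icc s tE, τ' ≠ τ → |τ' - τ| < δ →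
      P.nrm β ((τ' - τ)⁻¹ • (w τ' - w τ) - (P.A (w τ) + P.Z (w τ))) < ε)
    {W : ℝ} (hW0 : 0 ≤ W) (hWb : ∀ τ ∈ Icc s tE, P.nrm β (w τ) ≤ W)
    {a : ℝ} (ha : a ∈ Icc s tE) (ha0 : w a = 0) :
    ∀ τ ∈ Icc a (min (a + 1 / (2 * Real.exp 1 *
      (CBd P (tE - s) * (P.M γ / (γ - β) + P.Nf γ)))) tE), w τ = 0 := by
  set CBc := CBd P (tE - s) with hCBcdef
  have hCB0 : 0 < CBc := CBd_pos P _
  have hγβ : (0:ℝ) < γ - β := by linarith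
  set K₀ := CBc * (P.M γ / (γ - β) + P.Nf γ) with hK₀def
  have hK₀pos : 0 < K₀ :=
    mul_pos hCB0 (add_pos (div_pos (P.M_pos γ hγ) hγβ) (P.N_pos γ hγ))
  have hepos : (0:ℝ) < Real.exp 1 := Real.exp_pos 1
  set t₁ := 1 / (2 * Real.exp 1 * K₀) with ht₁def
  have ht₁pos : 0 < t₁ := by positivity
  intro τ hτ
  have hτa : a ≤ τ := hτ.1
  have hτt₁ : τ ≤ a + t₁ := le_trans hτ.2 (min_le_left _ _)
  have hτtE : τ ≤ tE := le_trans hτ.2 (min_le_right _ _)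
  have hτIcc : τ ∈ Icc s tE := ⟨le_trans ha.1 hτa, hτtE⟩
  have hwτγ : w τ ∈ P.B γ := P.B_mono β hβ γ hγ (le_of_lt hβγ) (H1 τ hτIcc)
  -- the key iterated estimate
  have key : ∀ n0 : ℕ, P.nrm γ (w τ) ≤ W * (1 / 2) ^ (n0 + 1) := by
    intro n0
    set n := n0 + 1 with hndef
    have hn1 : 1 ≤ n := Nat.le_add_left 1 n0
    have hnR : (1:ℝ) ≤ (n:ℝ) := by exact_mod_cast hn1
    have hnne : (n:ℝ) ≠ 0 := by positivity
    set d := (γ - β) / n with hddef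
    have hdpos : 0 < d := by positivity
    set lev : ℕ → ℝ := fun k => β + k * d with hlevdef
    have hlev0 : lev 0 = β := by simp [hlevdef]
    have hlevn : lev n = γ := by
      simp only [hlevdef, hddef]
      field_simp
      ring
    set Dn := CBc * (P.M γ * n / (γ - β) + P.Nf γ) with hDndef
    have hDn0 : 0 ≤ Dn := by
      apply le_of_lt
      apply mul_pos hCB0
      apply add_pos _ (P.N_pos γ hγ)
      apply div_pos _ hγβ
      exact mul_pos (P.M_pos γ hγ) (by positivity)
    have claim : ∀ k : ℕ, k ≤ n → ∀ σ ∈ Icc a τ,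
        P.nrm (lev k) (w σ) ≤ (W * Dn ^ k) * (σ - a) ^ k / (k.factorial : ℝ) := by
      intro k
      induction k with
      | zero =>
        intro _ σ hσ
        simp only [hlev0, pow_zero, mul_one, Nat.factorial_zero, Nat.cast_one, div_one]
        exact hWb σ ⟨le_trans ha.1 hσ.1, le_trans hσ.2 hτtE⟩
      | succ k ih =>
        intro hk1 σ hσ
        have hkn : k ≤ n := le_trans (Nat.le_succ k) hk1
        have hβlevk : β ≤ lev k := by
          simp only [hlevdef]
          nlinarith [Nat.cast_nonneg (α := ℝ) k, hdpos]
        have hlevlt : lev k < lev (k + 1) := by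
          simp only [hlevdef]
          push_cast
          nlinarith [hdpos]
        have hlevle : lev (k + 1) ≤ γ := by
          have hk1R : ((k:ℝ) + 1) ≤ (n:ℝ) := by exact_mod_cast hk1
          have hmul : ((k:ℝ) + 1) * d ≤ (n:ℝ) * d :=
            mul_le_mul_of_nonneg_right hk1R (le_of_lt hdpos)
          have hnd : (n:ℝ) * d = γ - β := by
            simp only [hddef]; field_simp
          have hlev1 : lev (k + 1) = β + ((k:ℝ) + 1) * d := by
            simp only [hlevdef]; push_cast; ring
          rw [hlev1]; linarith
        have hos := one_step P hβ hγ w H1 H2 H3 H4 hβlevk hlevlt hlevle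
          ha.1 hσ.1 (le_trans hσ.2 hτtE) ha0
          (mul_nonneg hW0 (pow_nonneg hDn0 k)) k
          (fun σ' hσ' => ih hkn σ' ⟨hσ'.1, le_trans hσ'.2 hσ.2⟩)
        have hdiff : lev (k + 1) - lev k = d := by
          simp only [hlevdef]
          push_cast
          ring
        rw [hdiff] at hos
        have hcoef : CBc * (P.M γ / d + P.Nf γ) = Dn := by
          simp only [hDndef, hddef]
          rw [div_div_eq_mul_div]
        rw [hcoef] at hos
        calc P.nrm (lev (k + 1)) (w σ) ≤ Dn * (W * Dn ^ k) * (σ - a) ^ (k + 1) /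
              ((k + 1).factorial : ℝ) := hos
          _ = (W * Dn ^ (k + 1)) * (σ - a) ^ (k + 1) / ((k + 1).factorial : ℝ) := by
              ring
    have hfin := claim n (le_refl n) τ ⟨hτa, le_refl τ⟩
    rw [hlevn] at hfin
    -- numeric estimate
    have hτa0 : (0:ℝ) ≤ τ - a := by linarith
    have hτat₁ : τ - a ≤ t₁ := by linarith
    have hstep1 : Dn ≤ (n:ℝ) * K₀ := by
      have h1 : P.M γ * n / (γ - β) = (n:ℝ) * (P.M γ / (γ - β)) := by ring
      have h2 : P.Nf γ ≤ (n:ℝ) * P.Nf γ := by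
        nlinarith [P.N_pos γ hγ, hnR]
      simp only [hDndef, hK₀def]
      rw [h1]
      nlinarith [hCB0, P.N_pos γ hγ]
    have hstep2 : Dn * (τ - a) ≤ (n:ℝ) / (2 * Real.exp 1) := by
      have h3 : Dn * (τ - a) ≤ ((n:ℝ) * K₀) * t₁ := by
        apply mul_le_mul hstep1 hτat₁ hτa0
        positivity
      have h4 : ((n:ℝ) * K₀) * t₁ = (n:ℝ) / (2 * Real.exp 1) := by
        simp only [ht₁def]
        field_simp
      linarith
    have hpow : Dn ^ n * (τ - a) ^ n ≤ ((n:ℝ) / (2 * Real.exp 1)) ^ n := by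
      rw [← mul_pow]
      exact pow_le_pow_left₀ (mul_nonneg hDn0 hτa0) hstep2 n
    have hfactpos : (0:ℝ) < (n.factorial : ℝ) := by exact_mod_cast n.factorial_pos
    have hexp : ((n:ℝ)) ^ n / (n.factorial : ℝ) ≤ (Real.exp 1) ^ n := by
      have h5 := Real.pow_div_factorial_le_exp (n:ℝ) (by positivity) n
      have h6 : Real.exp (n:ℝ) = (Real.exp 1) ^ n := by
        rw [← Real.exp_nat_mul]; simp
      linarith
    have hmain : Dn ^ n * (τ - a) ^ n / (n.factorial : ℝ) ≤ (1 / 2) ^ n := by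
      have h7 : Dn ^ n * (τ - a) ^ n / (n.factorial : ℝ) ≤
          ((n:ℝ) / (2 * Real.exp 1)) ^ n / (n.factorial : ℝ) := by gcongr
      have h8 : ((n:ℝ) / (2 * Real.exp 1)) ^ n / (n.factorial : ℝ) =
          ((n:ℝ) ^ n / (n.factorial : ℝ)) * (1 / (2 * Real.exp 1)) ^ n := by
        rw [div_pow]
        field_simp
        rw [← mul_pow, mul_one_div_cancel (by positivity), one_pow]
      have h9 : ((n:ℝ) ^ n / (n.factorial : ℝ)) * (1 / (2 * Real.exp 1)) ^ n ≤
          (Real.exp 1) ^ n * (1 / (2 * Real.exp 1)) ^ n := by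
        apply mul_le_mul_of_nonneg_right hexp
        positivity
      have h10 : (Real.exp 1) ^ n * (1 / (2 * Real.exp 1)) ^ n = (1 / 2) ^ n := by
        rw [← mul_pow]
        congr 1
        field_simp
      linarith
    calc P.nrm γ (w τ) ≤ (W * Dn ^ n) * (τ - a) ^ n / (n.factorial : ℝ) := hfin
      _ = W * (Dn ^ n * (τ - a) ^ n / (n.factorial : ℝ)) := by ring
      _ ≤ W * (1 / 2) ^ n := mul_le_mul_of_nonneg_left hmain hW0
  -- conclude
  have hnn : 0 ≤ P.nrm γ (w τ) := P.nrm_nonneg γ hγ (w τ) hwτγ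
  have hzero : P.nrm γ (w τ) = 0 := by
    by_contra hne
    have hpos : 0 < P.nrm γ (w τ) := lt_of_le_of_ne hnn (Ne.symm hne)
    have hW1 : (0:ℝ) < W + 1 := by linarith
    obtain ⟨n, hn⟩ := exists_pow_lt_of_lt_one (div_pos hpos hW1) (by norm_num : (1:ℝ)/2 < 1)
    have h1 := key n
    have h2 : W * (1 / 2 : ℝ) ^ (n + 1) ≤ (W + 1) * (1 / 2) ^ n := by
      have hp : (0:ℝ) ≤ (1/2:ℝ) ^ n := by positivity
      rw [pow_succ]
      nlinarith
    have h3 : (W + 1) * ((1:ℝ)/2) ^ n < (W + 1) * (P.nrm γ (w τ) / (W + 1)) :=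
      mul_lt_mul_of_pos_left hn hW1
    have h4 : (W + 1) * (P.nrm γ (w τ) / (W + 1)) = P.nrm γ (w τ) := by
      field_simp
    linarith
  exact P.nrm_eq_zero γ hγ (w τ) hwτγ hzero

set_option maxHeartbeats 1000000 in
lemma zero_on (P : OvsSystem) {β γ : ℝ} (hβ : β ∈ P.idx) (hγ : γ ∈ P.idx) (hβγ : β < γ)
    {s tE : ℝ} (hstE : s ≤ tE) (w : ℝ → P.V)
    (H1 : ∀ τ ∈ Icc s tE, w τ ∈ P.B β)
    (H2 : ∀ τ₀ ∈ Icc s tE, ∀ ε > 0, ∃ δ > 0, ∀ τ ∈ Icc s tE,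
      |τ - τ₀| < δ → P.nrm β (w τ - w τ₀) < ε)
    (H3 : ∀ τ ∈ Ioo s tE, P.A (w τ) ∈ P.B β ∧ P.Z (w τ) ∈ P.B β)
    (H4 : ∀ τ ∈ Ioo s tE, ∀ ε > 0, ∃ δ > 0, ∀ τ' ∈ Icc s tE, τ' ≠ τ → |τ' - τ| < δ →
      P.nrm β ((τ' - τ)⁻¹ • (w τ' - w τ) - (P.A (w τ) + P.Z (w τ))) < ε)
    (H5 : w s = 0) :
    ∀ τ ∈ Icc s tE, w τ = 0 := by
  -- a uniform bound for w on [s, tE]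
  have hbd : ∃ W : ℝ, 0 ≤ W ∧ ∀ τ ∈ Icc s tE, P.nrm β (w τ) ≤ W := by
    have hc : ContinuousOn (fun τ => P.nrm β (w τ)) (Icc s tE) := by
      rw [Metric.continuousOn_iff]
      intro x₀ hx₀ ε hε
      obtain ⟨δ, hδp, hδ⟩ := H2 x₀ hx₀ ε hε
      refine ⟨δ, hδp, fun x hx hdist => ?_⟩
      rw [Real.dist_eq] at hdist ⊢
      have h1 : |P.nrm β (w x) - P.nrm β (w x₀)| ≤ P.nrm β (w x - w x₀) :=
        abs_nrm_sub_le P hβ (H1 x hx) (H1 x₀ hx₀)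
      exact lt_of_le_of_lt h1 (hδ x hx hdist)
    obtain ⟨W, hW⟩ := isCompact_Icc.exists_bound_of_continuousOn hc
    refine ⟨max W 0, le_max_right _ _, fun τ hτ => ?_⟩
    have := hW τ hτ
    rw [Real.norm_eq_abs] at this
    exact le_trans (le_abs_self _) (le_trans this (le_max_left _ _))
  obtain ⟨W, hW0, hWb⟩ := hbd
  set t₁ := 1 / (2 * Real.exp 1 *
    (CBd P (tE - s) * (P.M γ / (γ - β) + P.Nf γ))) with ht₁def
  have hCB0 : 0 < CBd P (tE - s) := CBd_pos P _
  have hγβ : (0:ℝ) < γ - β := by linarith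
  have hK₀pos : 0 < CBd P (tE - s) * (P.M γ / (γ - β) + P.Nf γ) :=
    mul_pos hCB0 (add_pos (div_pos (P.M_pos γ hγ) hγβ) (P.N_pos γ hγ))
  have ht₁pos : 0 < t₁ := by positivity
  have step : ∀ j : ℕ, ∀ τ ∈ Icc s (min (s + (j:ℝ) * t₁) tE), w τ = 0 := by
    intro j
    induction j with
    | zero =>
      intro τ hτ
      have h1 : τ ≤ s := by
        have := hτ.2
        simp only [Nat.cast_zero, zero_mul, add_zero] at this
        exact le_trans this (min_le_left _ _)
      have : τ = s := le_antisymm h1 hτ.1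
      rw [this]; exact H5
    | succ j ih =>
      intro τ hτ
      set a := min (s + (j:ℝ) * t₁) tE with hadef
      have hsa : s ≤ a := le_min (by nlinarith [ht₁pos, Nat.cast_nonneg (α := ℝ) j]) hstE
      have haIcc : a ∈ Icc s tE := ⟨hsa, min_le_right _ _⟩
      have ha0 : w a = 0 := ih a ⟨hsa, le_refl a⟩
      by_cases hcase : τ ≤ a
      · exact ih τ ⟨hτ.1, hcase⟩
      · push_neg at hcase
        have hτtE : τ ≤ tE := le_trans hτ.2 (min_le_right _ _)
        have hτa1 : τ ≤ a + t₁ := by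
          rcases le_total (s + (j:ℝ) * t₁) tE with hle | hle
          · have ha_eq : a = s + (j:ℝ) * t₁ := min_eq_left hle
            have h2 : τ ≤ s + ((j:ℝ) + 1) * t₁ := by
              have := hτ.2
              push_cast at this
              exact le_trans this (min_le_left _ _)
            rw [ha_eq]
            linarith
          · have ha_eq : a = tE := min_eq_right hle
            rw [ha_eq] at hcase
            linarith
        exact local_zero P hβ hγ hβγ hstE w H1 H2 H3 H4 hW0 hWb haIcc ha0 τ
          ⟨le_of_lt hcase, le_min hτa1 hτtE⟩
  intro τ hτ
  obtain ⟨j, hj⟩ := exists_nat_ge ((tE - s) / t₁)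
  have hjt : tE - s ≤ (j:ℝ) * t₁ := by
    rw [div_le_iff₀ ht₁pos] at hj
    linarith
  exact step j τ ⟨hτ.1, le_min (by linarith [hτ.2]) hτ.2⟩

end OvsHelp


open OvsHelp

set_option maxHeartbeats 1000000

/-- **Remark (consistency of solutions in different terminal spaces).** Under
Assumptions 1–3, let `α* < α**` in `I`, `s ≥ 0`, `α_s ∈ (α̲, α*)`, `u_s ∈ B_{α_s}`,
`T = T(α_s, α*)`, `T̃ = T(α_s, α**)`, `T₀ = min{T, T̃}`. If `u` solves the IVP in
`B_{α*}` on `[s, s+T)` and `ũ` solves the same IVP in `B_{α**}` on `[s, s+T̃)`,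
then `ũ(t) = u(t) ∈ B_{α*}` for all `t ∈ [s, s+T₀)`. -/
theorem consistency_of_terminal_spaces (P : OvsSystem)
    (αst αstst : ℝ) (hαst : αst ∈ P.idx) (hαstst : αstst ∈ P.idx) (hlt : αst < αstst)
    (s : ℝ) (hs : 0 ≤ s) (αs : ℝ) (hαs : αs ∈ Set.Ioo P.aLow αst)
    (us : P.V) (hus : us ∈ P.B αs)
    (u : ℝ → P.V) (hu : P.IsSol αst s (P.Tt αs αst) us u)
    (utld : ℝ → P.V) (hutld : P.IsSol αstst s (P.Tt αs αstst) us utld) :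
    ∀ t ∈ Set.Ico s (s + min (P.Tt αs αst) (P.Tt αs αstst)),
      utld t = u t ∧ u t ∈ P.B αst := by
  intro t ht
  have hT1 : t < s + P.Tt αs αst :=
    lt_of_lt_of_le ht.2 (add_le_add_right (min_le_left _ _) s)
  have hT2 : t < s + P.Tt αs αstst :=
    lt_of_lt_of_le ht.2 (add_le_add_right (min_le_right _ _) s)
  have hst : s ≤ t := ht.1
  have mem1 : Set.Icc s t ⊆ Set.Ico s (s + P.Tt αs αst) :=
    fun τ hτ => ⟨hτ.1, lt_of_le_of_lt hτ.2 hT1⟩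
  have mem2 : Set.Icc s t ⊆ Set.Ico s (s + P.Tt αs αstst) :=
    fun τ hτ => ⟨hτ.1, lt_of_le_of_lt hτ.2 hT2⟩
  have huB : ∀ τ ∈ Set.Icc s t, u τ ∈ P.B αst := fun τ hτ => hu.1 τ (mem1 hτ)
  have hutB : ∀ τ ∈ Set.Icc s t, utld τ ∈ P.B αstst := fun τ hτ => hutld.1 τ (mem2 hτ)
  have hBle : P.B αst ≤ P.B αstst := P.B_mono αst hαst αstst hαstst (le_of_lt hlt)
  have hnle : ∀ x ∈ P.B αst, P.nrm αstst x ≤ P.nrm αst x :=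
    fun x hx => P.nrm_mono αst hαst αstst hαstst (le_of_lt hlt) x hx
  -- choose an index strictly above αstst
  obtain ⟨γ, hγgt, hγidx⟩ : ∃ γ : ℝ, αstst < γ ∧ γ ∈ P.idx := by
    have h2 := hαstst
    rw [P.idx_def] at h2
    obtain ⟨z, hz1, hz2⟩ := exists_between h2.2
    have hzt : z ≠ ⊤ := ne_top_of_lt (lt_of_lt_of_le hz2 le_top)
    have hzb : z ≠ ⊥ := ne_bot_of_gt hz1
    refine ⟨z.toReal, ?_, ?_⟩
    · have h3 := hz1
      rw [← EReal.coe_toReal hzt hzb] at h3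
      exact_mod_cast h3
    · rw [P.idx_def]
      constructor
      · have h4 : (P.aLow : EReal) < z := lt_trans (EReal.coe_lt_coe_iff.mpr h2.1) hz1
        rw [← EReal.coe_toReal hzt hzb] at h4
        exact_mod_cast h4
      · show (z.toReal : EReal) < P.aHigh
        rw [EReal.coe_toReal hzt hzb]
        exact hz2
  set w : ℝ → P.V := fun τ => utld τ - u τ with hwdef
  have H1 : ∀ τ ∈ Set.Icc s t, w τ ∈ P.B αstst :=
    fun τ hτ => sub_mem (hutB τ hτ) (hBle (huB τ hτ))
  have H2 : ∀ τ₀ ∈ Set.Icc s t, ∀ ε > 0, ∃ δ > 0, ∀ τ ∈ Set.Icc s t, |τ - τ₀| < δ →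
      P.nrm αstst (w τ - w τ₀) < ε := by
    intro τ₀ hτ₀ ε hε
    obtain ⟨δ₁, hδ₁p, hδ₁⟩ := hu.2.1 τ₀ (mem1 hτ₀) (ε / 2) (half_pos hε)
    obtain ⟨δ₂, hδ₂p, hδ₂⟩ := hutld.2.1 τ₀ (mem2 hτ₀) (ε / 2) (half_pos hε)
    refine ⟨min δ₁ δ₂, lt_min hδ₁p hδ₂p, fun τ hτ hd => ?_⟩
    by_cases hne : τ = τ₀
    · rw [hne, sub_self, P.nrm_zero αstst hαstst]
      exact hε
    · have e1 := hδ₁ τ (mem1 hτ) hne (lt_of_lt_of_le hd (min_le_left _ _))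
      have e2 := hδ₂ τ (mem2 hτ) hne (lt_of_lt_of_le hd (min_le_right _ _))
      have hid : w τ - w τ₀ = (utld τ - utld τ₀) - (u τ - u τ₀) := by
        simp only [hwdef]
        abel
      rw [hid]
      have m1 : utld τ - utld τ₀ ∈ P.B αstst := sub_mem (hutB τ hτ) (hutB τ₀ hτ₀)
      have m1' : u τ - u τ₀ ∈ P.B αst := sub_mem (huB τ hτ) (huB τ₀ hτ₀)
      have e3 : P.nrm αstst (u τ - u τ₀) ≤ P.nrm αst (u τ - u τ₀) := hnle _ m1'
      have e4 := nrm_sub_le P hαstst m1 (hBle m1')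
      linarith
  have H3 : ∀ τ ∈ Set.Ioo s t, P.A (w τ) ∈ P.B αstst ∧ P.Z (w τ) ∈ P.B αstst := by
    intro τ hτ
    have h1 := hu.2.2.1 τ ⟨hτ.1, lt_trans hτ.2 hT1⟩
    have h2 := hutld.2.2.1 τ ⟨hτ.1, lt_trans hτ.2 hT2⟩
    constructor
    · have hid : P.A (w τ) = P.A (utld τ) - P.A (u τ) := by
        simp only [hwdef]
        exact map_sub _ _ _
      rw [hid]
      exact sub_mem h2.1 (hBle h1.1)
    · have hid : P.Z (w τ) = P.Z (utld τ) - P.Z (u τ) := by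
        simp only [hwdef]
        exact map_sub _ _ _
      rw [hid]
      exact sub_mem h2.2 (hBle h1.2)
  have H4 : ∀ τ ∈ Set.Ioo s t, ∀ ε > 0, ∃ δ > 0, ∀ τ' ∈ Set.Icc s t, τ' ≠ τ →
      |τ' - τ| < δ →
      P.nrm αstst ((τ' - τ)⁻¹ • (w τ' - w τ) - (P.A (w τ) + P.Z (w τ))) < ε := by
    intro τ hτ ε hε
    have hτ1 : τ ∈ Set.Ioo s (s + P.Tt αs αst) := ⟨hτ.1, lt_trans hτ.2 hT1⟩
    have hτ2 : τ ∈ Set.Ioo s (s + P.Tt αs αstst) := ⟨hτ.1, lt_trans hτ.2 hT2⟩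
    have hτIcc : τ ∈ Set.Icc s t := ⟨le_of_lt hτ.1, le_of_lt hτ.2⟩
    obtain ⟨δ₁, hδ₁p, hδ₁⟩ := hu.2.2.2.1 τ hτ1 (ε / 2) (half_pos hε)
    obtain ⟨δ₂, hδ₂p, hδ₂⟩ := hutld.2.2.2.1 τ hτ2 (ε / 2) (half_pos hε)
    refine ⟨min δ₁ δ₂, lt_min hδ₁p hδ₂p, fun τ' hτ' hne hd => ?_⟩
    have e1 := hδ₁ τ' (mem1 hτ') hne (lt_of_lt_of_le hd (min_le_left _ _))
    have e2 := hδ₂ τ' (mem2 hτ') hne (lt_of_lt_of_le hd (min_le_right _ _))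
    have hid : (τ' - τ)⁻¹ • (w τ' - w τ) - (P.A (w τ) + P.Z (w τ)) =
        ((τ' - τ)⁻¹ • (utld τ' - utld τ) - (P.A (utld τ) + P.Z (utld τ))) -
        ((τ' - τ)⁻¹ • (u τ' - u τ) - (P.A (u τ) + P.Z (u τ))) := by
      simp only [hwdef, map_sub, smul_sub]
      abel
    rw [hid]
    have hq1 : (τ' - τ)⁻¹ • (utld τ' - utld τ) - (P.A (utld τ) + P.Z (utld τ)) ∈
        P.B αstst := by
      have hm := hutld.2.2.1 τ hτ2
      exact sub_mem (Submodule.smul_mem _ _ (sub_mem (hutB τ' hτ') (hutB τ hτIcc)))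
        (add_mem hm.1 hm.2)
    have hq2 : (τ' - τ)⁻¹ • (u τ' - u τ) - (P.A (u τ) + P.Z (u τ)) ∈ P.B αst := by
      have hm := hu.2.2.1 τ hτ1
      exact sub_mem (Submodule.smul_mem _ _ (sub_mem (huB τ' hτ') (huB τ hτIcc)))
        (add_mem hm.1 hm.2)
    have e3 : P.nrm αstst ((τ' - τ)⁻¹ • (u τ' - u τ) - (P.A (u τ) + P.Z (u τ))) ≤
        P.nrm αst ((τ' - τ)⁻¹ • (u τ' - u τ) - (P.A (u τ) + P.Z (u τ))) := hnle _ hq2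
    have e4 := nrm_sub_le P hαstst hq1 (hBle hq2)
    linarith
  have H5 : w s = 0 := by
    simp only [hwdef]
    rw [hu.2.2.2.2, hutld.2.2.2.2, sub_self]
  have hz := zero_on P hαstst hγidx hγgt hst w H1 H2 H3 H4 H5
  have hwt : w t = 0 := hz t ⟨hst, le_refl t⟩
  constructor
  · have : utld t - u t = 0 := hwt
    exact sub_eq_zero.mp this
  · exact huB t ⟨hst, le_refl t⟩
end
end

section
/- Let x₀ = (1 + √5)/2 and let b be a real number with 0 < 2b < (2 − x₀) e^{−x₀}, i.e. 0 < b < ((3 − √5)/4) e^{−(1+√5)/2}. Define f : (0, ∞) → ℝ by f(x) = x e^{−x} + b x². Then f has two points of local extremum on (0, ∞), and there exists c > 0 such that the equation f(x) = c has (at least) three distinct positive solutions x₁ < x₂ < x₃. -/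
open Real Filter Set Topology

private lemma fderiv_aux (b x : ℝ) :
    HasDerivAt (fun x : ℝ => x * Real.exp (-x) + b * x ^ 2)
      ((1 - x) * Real.exp (-x) + 2 * b * x) x := by
  have h1 : HasDerivAt (fun x : ℝ => Real.exp (-x)) (Real.exp (-x) * (-1)) x :=
    (hasDerivAt_neg x).exp
  have h2 : HasDerivAt (fun x : ℝ => x * Real.exp (-x))
      (1 * Real.exp (-x) + x * (Real.exp (-x) * (-1))) x :=
    (hasDerivAt_id' x).mul h1
  have h3 : HasDerivAt (fun x : ℝ => b * x ^ 2) (b * (↑2 * x ^ 1)) x :=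
    (hasDerivAt_pow 2 x).const_mul b
  refine (h2.add h3).congr_deriv ?_
  ring

/-- If `x₀ = (1 + √5)/2` and `0 < 2b < (2 − x₀)e^{−x₀}`, then
`f(x) = x e^{−x} + b x²` has two points of local extremum on `(0, ∞)` (a local
maximum followed by a local minimum), and there exists `c > 0` such that the
equation `f(x) = c` has three distinct positive solutions. -/
theorem three_stationary_points (b : ℝ) (hb : 0 < 2 * b)
    (hb2 : 2 * b <
      (2 - (1 + Real.sqrt 5) / 2) * Real.exp (-((1 + Real.sqrt 5) / 2))) :
    (∃ x₁ x₂ : ℝ, 0 < x₁ ∧ x₁ < x₂ ∧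
      IsLocalMax (fun x : ℝ => x * Real.exp (-x) + b * x ^ 2) x₁ ∧
      IsLocalMin (fun x : ℝ => x * Real.exp (-x) + b * x ^ 2) x₂) ∧
    ∃ c > (0:ℝ), ∃ y₁ y₂ y₃ : ℝ, 0 < y₁ ∧ y₁ < y₂ ∧ y₂ < y₃ ∧
      y₁ * Real.exp (-y₁) + b * y₁ ^ 2 = c ∧
      y₂ * Real.exp (-y₂) + b * y₂ ^ 2 = c ∧
      y₃ * Real.exp (-y₃) + b * y₃ ^ 2 = c := by
  set x0 : ℝ := (1 + Real.sqrt 5) / 2 with hx0def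
  have hs5 : Real.sqrt 5 ^ 2 = 5 := Real.sq_sqrt (by norm_num)
  have hs5pos : 0 < Real.sqrt 5 := Real.sqrt_pos.mpr (by norm_num)
  have hbpos : 0 < b := by linarith
  have hx0pos : 0 < x0 := by rw [hx0def]; positivity
  set f : ℝ → ℝ := fun x => x * Real.exp (-x) + b * x ^ 2 with hfdef
  have hfc : Continuous f := by
    rw [hfdef]
    exact (continuous_id.mul (Real.continuous_exp.comp continuous_neg)).add
      (continuous_const.mul (continuous_pow 2))
  have hfpos : ∀ x : ℝ, 0 < x → 0 < f x := by
    intro x hx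
    have := Real.exp_pos (-x)
    rw [hfdef]
    positivity
  have hf0 : f 0 = 0 := by simp [hfdef]
  -- derivative at x0 is negative
  have hderiv : HasDerivAt f ((1 - x0) * Real.exp (-x0) + 2 * b * x0) x0 := fderiv_aux b x0
  clear_value f
  have hx0sq : x0 ^ 2 = x0 + 1 := by rw [hx0def]; nlinarith [hs5]
  have hdneg : (1 - x0) * Real.exp (-x0) + 2 * b * x0 < 0 := by
    have hE : 0 < Real.exp (-x0) := Real.exp_pos _
    have h2 : 2 * b * x0 < (2 - x0) * Real.exp (-x0) * x0 :=
      mul_lt_mul_of_pos_right hb2 hx0pos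
    nlinarith [hE, hx0sq]
  have hslope : Tendsto (slope f x0) (𝓝[≠] x0) (𝓝 ((1 - x0) * Real.exp (-x0) + 2 * b * x0)) :=
    hasDerivAt_iff_tendsto_slope.mp hderiv
  have hev : ∀ᶠ t in 𝓝[≠] x0, slope f x0 t < 0 := hslope.eventually_lt_const hdneg
  -- a point t < x0 with f t > f x0
  have hlel : 𝓝[<] x0 ≤ 𝓝[≠] x0 :=
    nhdsWithin_mono x0 (fun y hy => by simpa using ne_of_lt hy)
  have hevl : ∀ᶠ t in 𝓝[<] x0, slope f x0 t < 0 ∧ 0 < t ∧ t < x0 := by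
    refine (hev.filter_mono hlel).and (Filter.Eventually.and ?_ ?_)
    · exact ((eventually_gt_nhds hx0pos).filter_mono nhdsWithin_le_nhds)
    · exact eventually_mem_nhdsWithin
  obtain ⟨t, hts, ht0, htlt⟩ := hevl.exists
  have hft : f x0 < f t := by
    rw [slope_def_field] at hts
    rcases div_neg_iff.mp hts with ⟨h1, h2⟩ | ⟨h1, h2⟩ <;> linarith
  -- local max on [0, x0]
  obtain ⟨x₁, hx₁mem, hx₁max⟩ := isCompact_Icc.exists_isMaxOn
    (nonempty_Icc.mpr hx0pos.le) (hfc.continuousOn : ContinuousOn f (Icc 0 x0))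
  have hfx₁t : f t ≤ f x₁ := hx₁max ⟨ht0.le, htlt.le⟩
  have hfx0x₁ : f x0 < f x₁ := lt_of_lt_of_le hft hfx₁t
  have hfx₁pos : 0 < f x₁ := lt_trans (hfpos x0 hx0pos) hfx0x₁
  have hx₁pos : 0 < x₁ := by
    rcases lt_or_eq_of_le hx₁mem.1 with h | h
    · exact h
    · exfalso; rw [← h] at hfx₁pos; rw [hf0] at hfx₁pos; exact lt_irrefl 0 hfx₁pos
  have hx₁lt : x₁ < x0 := by
    rcases lt_or_eq_of_le hx₁mem.2 with h | h
    · exact h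
    · exfalso; rw [h] at hfx0x₁; exact lt_irrefl _ hfx0x₁
  have hlocmax : IsLocalMax f x₁ :=
    hx₁max.isLocalMax (Icc_mem_nhds hx₁pos hx₁lt)
  -- choose M large
  set M : ℝ := max (x0 + 1) (max 1 (f x₁ / b + 1)) with hMdef
  have hM1 : (1:ℝ) ≤ M := le_max_of_le_right (le_max_left _ _)
  have hMx0 : x0 < M := lt_of_lt_of_le (by linarith) (le_max_left _ _)
  have hMpos : 0 < M := by linarith
  have hMfx₁ : f x₁ / b + 1 ≤ M := le_max_of_le_right (le_max_right _ _)
  have hbM : f x₁ < b * M ^ 2 := by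
    have h1 : b * (f x₁ / b + 1) ≤ b * M := mul_le_mul_of_nonneg_left hMfx₁ hbpos.le
    rw [mul_add, mul_div_cancel₀ _ (ne_of_gt hbpos)] at h1
    nlinarith
  have hfM : f x₁ < f M := by
    have h0 := mul_pos hMpos (Real.exp_pos (-M))
    have hfMval : f M = M * Real.exp (-M) + b * M ^ 2 := by simp only [hfdef]
    linarith
  -- a point u > x0 with f u < f x0
  have hler : 𝓝[>] x0 ≤ 𝓝[≠] x0 :=
    nhdsWithin_mono x0 (fun y hy => by simpa using (ne_of_gt hy))
  have hevr : ∀ᶠ t in 𝓝[>] x0, slope f x0 t < 0 ∧ t < M ∧ x0 < t := by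
    refine (hev.filter_mono hler).and (Filter.Eventually.and ?_ ?_)
    · exact ((eventually_lt_nhds hMx0).filter_mono nhdsWithin_le_nhds)
    · exact eventually_mem_nhdsWithin
  obtain ⟨u, hus, huM, hx0u⟩ := hevr.exists
  have hfu : f u < f x0 := by
    rw [slope_def_field] at hus
    rcases div_neg_iff.mp hus with ⟨h1, h2⟩ | ⟨h1, h2⟩ <;> linarith
  -- local min on [x0, M]
  obtain ⟨x₂, hx₂mem, hx₂min⟩ := isCompact_Icc.exists_isMinOn
    (nonempty_Icc.mpr hMx0.le) (hfc.continuousOn : ContinuousOn f (Icc x0 M))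
  have hfx₂u : f x₂ ≤ f u := hx₂min ⟨hx0u.le, huM.le⟩
  have hfx₂x0 : f x₂ < f x0 := lt_of_le_of_lt hfx₂u hfu
  have hx₂gt : x0 < x₂ := by
    rcases lt_or_eq_of_le hx₂mem.1 with h | h
    · exact h
    · exfalso; rw [← h] at hfx₂x0; exact lt_irrefl _ hfx₂x0
  have hfx₂x₁ : f x₂ < f x₁ := lt_trans hfx₂x0 hfx0x₁
  have hx₂lt : x₂ < M := by
    rcases lt_or_eq_of_le hx₂mem.2 with h | h
    · exact h
    · exfalso; rw [h] at hfx₂x₁; linarith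
  have hlocmin : IsLocalMin f x₂ :=
    hx₂min.isLocalMin (Icc_mem_nhds hx₂gt hx₂lt)
  have hx₁x₂ : x₁ < x₂ := lt_trans hx₁lt hx₂gt
  refine ⟨⟨x₁, x₂, hx₁pos, hx₁x₂, hlocmax, hlocmin⟩, ?_⟩
  -- the level c
  set c : ℝ := (f x₂ + f x₁) / 2 with hcdef
  have hfx₂pos : 0 < f x₂ := hfpos x₂ (lt_trans hx0pos hx₂gt)
  have hcpos : 0 < c := by rw [hcdef]; linarith
  have hc1 : f x₂ < c := by rw [hcdef]; linarith
  have hc2 : c < f x₁ := by rw [hcdef]; linarith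
  -- three solutions by IVT
  have hy₁ : ∃ y ∈ Ioo (0:ℝ) x₁, f y = c := by
    have := intermediate_value_Ioo hx₁pos.le hfc.continuousOn (f := f)
    have hmem : c ∈ Ioo (f 0) (f x₁) := by rw [hf0]; exact ⟨hcpos, hc2⟩
    obtain ⟨y, hy, hyc⟩ := this hmem
    exact ⟨y, hy, hyc⟩
  have hy₂ : ∃ y ∈ Ioo x₁ x₂, f y = c := by
    have := intermediate_value_Ioo' hx₁x₂.le hfc.continuousOn (f := f)
    obtain ⟨y, hy, hyc⟩ := this ⟨hc1, hc2⟩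
    exact ⟨y, hy, hyc⟩
  have hy₃ : ∃ y ∈ Ioo x₂ M, f y = c := by
    have := intermediate_value_Ioo hx₂lt.le hfc.continuousOn (f := f)
    have hmem : c ∈ Ioo (f x₂) (f M) := ⟨hc1, lt_trans hc2 hfM⟩
    obtain ⟨y, hy, hyc⟩ := this hmem
    exact ⟨y, hy, hyc⟩
  obtain ⟨y₁, hy₁m, hy₁c⟩ := hy₁
  obtain ⟨y₂, hy₂m, hy₂c⟩ := hy₂
  obtain ⟨y₃, hy₃m, hy₃c⟩ := hy₃
  rw [hfdef] at hy₁c hy₂c hy₃c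
  exact ⟨c, hcpos, y₁, y₂, y₃, hy₁m.1, lt_trans hy₁m.2 hy₂m.1,
    lt_trans hy₂m.2 hy₃m.1, hy₁c, hy₂c, hy₃c⟩
end
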